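/- arXiv:2204.09322 — 3 statements merged into one kernel-verified Lean document; each statement's English description precedes it below -/
import Mathlib

section
/- Let p be a prime and a ∈ ℕ with a ≥ 1, and set ν_p = 1 if p = 2 and ν_p = 0 if p > 2. Let u ∈ (ℤ/p^aℤ)⁴ with p ∤ u (not all coordinates divisible by p) and Q₁(u) ≡ Q₂(u) ≡ 0 mod p^a. Then for any integer b > a, #{v ∈ (ℤ/p^bℤ)⁴ : Q₁(v) ≡ Q₂(v) ≡ 0 mod p^b and v ≡ u mod p^a} ≤ p^{2(b−a)} if p ∤ Δ, and ≤ p^{2ν_p + 3(b−a)} if p ∣ Δ. -/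
open scoped BigOperators

noncomputable section

/-- `p ∣ Δ`, where Δ is the squarefree integer whose prime divisors are exactly 2
together with the primes dividing `a i * b j - a j * b i` for some `i ≠ j`. -/
def pDvdDelta (a b : Fin 4 → ℤ) (p : ℕ) : Prop :=
  p = 2 ∨ ∃ i j : Fin 4, i ≠ j ∧ (p : ℤ) ∣ (a i * b j - a j * b i)



section Aux

variable {p : ℕ}

lemma aux_nezero (hp : p.Prime) (n : ℕ) : NeZero (p ^ n) := ⟨(pow_pos hp.pos n).ne'⟩

lemma aux_dvd_iff (hp : p.Prime) {α : ℕ} (hα : 1 ≤ α) (u : ZMod (p ^ α)) :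
    (p : ZMod (p ^ α)) ∣ u ↔ p ∣ u.val := by
  haveI := aux_nezero hp α
  constructor
  · rintro ⟨t, rfl⟩
    have h1 : ((p * t.val : ℕ) : ZMod (p ^ α)) = (p : ZMod (p ^ α)) * t := by
      push_cast [ZMod.natCast_val, ZMod.cast_id]
      rfl
    rw [← h1, ZMod.val_natCast]
    exact (Nat.dvd_mod_iff (dvd_pow_self p (by omega))).mpr ⟨t.val, rfl⟩
  · rintro ⟨s, hs⟩
    have : u = ((p * s : ℕ) : ZMod (p ^ α)) := by
      rw [← hs, ZMod.natCast_val, ZMod.cast_id]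
    rw [this]
    push_cast
    exact Dvd.intro _ rfl

lemma aux_isUnit (hp : p.Prime) {β : ℕ} {d : ℤ} (hd : ¬ (p : ℤ) ∣ d) :
    IsUnit ((d : ℤ) : ZMod (p ^ β)) := by
  have hcop : IsCoprime ((p : ℤ) ^ β) d :=
    (((Nat.prime_iff_prime_int.mp hp).coprime_iff_not_dvd).mpr hd).pow_left
  obtain ⟨s, t, hst⟩ := hcop
  have h := congrArg (fun z : ℤ => (z : ZMod (p ^ β))) hst
  have h0 : ((p : ℕ) : ZMod (p ^ β)) ^ β = 0 := by
    rw [← Nat.cast_pow, ZMod.natCast_self]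
  push_cast [h0] at h
  exact IsUnit.of_mul_eq_one ((t : ℤ) : ZMod (p ^ β)) (by linear_combination h)

-- castHom val
lemma aux_cast_val (hp : p.Prime) {α β : ℕ} (h : α ≤ β) (x : ZMod (p ^ β)) :
    (ZMod.castHom (pow_dvd_pow p h) (ZMod (p ^ α)) x).val = x.val % p ^ α := by
  haveI := aux_nezero hp α; haveI := aux_nezero hp β
  rw [ZMod.castHom_apply, ← ZMod.natCast_val, ZMod.val_natCast]

lemma aux_intCast_val (hp : p.Prime) {β : ℕ} (x : ZMod (p ^ β)) :
    ((x.val : ℤ) : ZMod (p ^ β)) = x := by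
  haveI := aux_nezero hp β
  push_cast [ZMod.natCast_val, ZMod.cast_id]
  rfl

lemma aux_sub_dvd (hp : p.Prime) {β : ℕ} {x y : ZMod (p ^ β)} (h : x = y) :
    ((p : ℤ)) ^ β ∣ (x.val : ℤ) - (y.val : ℤ) := by
  haveI := aux_nezero hp β
  have : (((x.val : ℤ) - y.val : ℤ) : ZMod (p ^ β)) = 0 := by
    push_cast [aux_intCast_val hp]
    rw [h, sub_self]
  rw [ZMod.intCast_zmod_eq_zero_iff_dvd] at this
  push_cast at this
  exact this

lemma aux_eq_of_dvd (hp : p.Prime) {β : ℕ} {x y : ZMod (p ^ β)}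
    (h : ((p : ℤ)) ^ β ∣ (x.val : ℤ) - (y.val : ℤ)) : x = y := by
  haveI := aux_nezero hp β
  have : (((x.val : ℤ) - y.val : ℤ) : ZMod (p ^ β)) = 0 := by
    rw [ZMod.intCast_zmod_eq_zero_iff_dvd]; push_cast; exact h
  push_cast [aux_intCast_val hp] at this
  linear_combination this

end Aux


lemma key_sqrt {p : ℕ} (hp : p.Prime) {α β : ℕ} (hα : 1 ≤ α) (hαβ : α < β)
    {u : ZMod (p ^ α)} (hu : ¬ (p : ZMod (p ^ α)) ∣ u)
    {x y : ZMod (p ^ β)}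
    (hx : ZMod.castHom (pow_dvd_pow p hαβ.le) (ZMod (p ^ α)) x = u)
    (hy : ZMod.castHom (pow_dvd_pow p hαβ.le) (ZMod (p ^ α)) y = u)
    (hsq : x ^ 2 = y ^ 2) :
    y = x ∨ (p = 2 ∧ (y = -x ∨ y = x + ((2 ^ (β - 1) : ℕ) : ZMod (p ^ β)) ∨
      y = -x + ((2 ^ (β - 1) : ℕ) : ZMod (p ^ β)))) := by
  haveI := aux_nezero hp α; haveI := aux_nezero hp β
  set X : ℤ := (x.val : ℤ) with hX
  set Y : ℤ := (y.val : ℤ) with hY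
  set U : ℤ := (u.val : ℤ) with hU
  have hdvd : (p : ℤ) ^ β ∣ (X - Y) * (X + Y) := by
    have h0 : (((X ^ 2 - Y ^ 2 : ℤ)) : ZMod (p ^ β)) = 0 := by
      push_cast [aux_intCast_val hp]
      rw [hX, hY, aux_intCast_val hp, aux_intCast_val hp, hsq, sub_self]
    rw [ZMod.intCast_zmod_eq_zero_iff_dvd] at h0
    push_cast at h0
    convert h0 using 1; ring
  have hXu : (p : ℤ) ^ α ∣ X - U := by
    have h1 : x.val % p ^ α = u.val := by rw [← aux_cast_val hp hαβ.le, hx]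
    refine Int.dvd_self_sub_of_emod_eq ?_
    rw [hX, hU, ← h1]
    push_cast [Int.natCast_mod]
    rfl
  have hYu : (p : ℤ) ^ α ∣ Y - U := by
    have h1 : y.val % p ^ α = u.val := by rw [← aux_cast_val hp hαβ.le, hy]
    refine Int.dvd_self_sub_of_emod_eq ?_
    rw [hY, hU, ← h1]
    push_cast [Int.natCast_mod]
    rfl
  have hpdvd : (p : ℤ) ∣ (p : ℤ) ^ α := dvd_pow_self _ (by omega)
  have hpX : (p : ℤ) ∣ X - U := hpdvd.trans hXu
  have hpY : (p : ℤ) ∣ Y - U := hpdvd.trans hYu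
  have hpU : ¬ (p : ℤ) ∣ U := by
    rw [hU, Int.natCast_dvd_natCast]
    exact fun h => hu ((aux_dvd_iff hp hα u).mpr h)
  have hpprime : Prime (p : ℤ) := Nat.prime_iff_prime_int.mp hp
  by_cases hp2 : p = 2
  · -- p = 2
    subst hp2
    have h2X : ¬ (2 : ℤ) ∣ X := by omega
    have hββ : (2 : ℤ) ^ β = 2 ^ (β - 1) * 2 := by
      rw [← pow_succ]; congr 1; omega
    have hkey : (2 : ℤ) ^ (β - 1) ∣ X - Y ∨ (2 : ℤ) ^ (β - 1) ∣ X + Y := by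
      by_cases h4 : (4 : ℤ) ∣ X + Y
      · obtain ⟨m, hm⟩ : (2 : ℤ) ∣ X - Y := by omega
        have hmodd : ¬ (2 : ℤ) ∣ m := by omega
        right
        have h5 : (2 : ℤ) ^ (β - 1) ∣ m * (X + Y) := by
          have h6 : (2:ℤ) * ((2:ℤ) ^ (β-1)) ∣ 2 * (m * (X + Y)) := by
            have : (2:ℤ) * (m * (X + Y)) = (X - Y) * (X + Y) := by rw [hm]; ring
            rw [this, mul_comm (2:ℤ), ← hββ]
            exact_mod_cast hdvd
          exact (mul_dvd_mul_iff_left (by norm_num : (2:ℤ) ≠ 0)).mp h6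
        have hcop : IsCoprime ((2:ℤ) ^ (β - 1)) m :=
          (((Int.prime_two).coprime_iff_not_dvd).mpr hmodd).pow_left
        exact hcop.dvd_of_dvd_mul_left h5
      · obtain ⟨m, hm⟩ : (2 : ℤ) ∣ X + Y := by omega
        have hmodd : ¬ (2 : ℤ) ∣ m := by omega
        left
        have h5 : (2 : ℤ) ^ (β - 1) ∣ m * (X - Y) := by
          have h6 : (2:ℤ) * ((2:ℤ) ^ (β-1)) ∣ 2 * (m * (X - Y)) := by
            have : (2:ℤ) * (m * (X - Y)) = (X - Y) * (X + Y) := by rw [hm]; ring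
            rw [this, mul_comm (2:ℤ), ← hββ]
            exact_mod_cast hdvd
          exact (mul_dvd_mul_iff_left (by norm_num : (2:ℤ) ≠ 0)).mp h6
        have hcop : IsCoprime ((2:ℤ) ^ (β - 1)) m :=
          (((Int.prime_two).coprime_iff_not_dvd).mpr hmodd).pow_left
        exact hcop.dvd_of_dvd_mul_left h5
    set c : ZMod (2 ^ β) := (((2:ℕ) ^ (β - 1) : ℕ) : ZMod (2 ^ β)) with hc
    have hc2 : c * 2 = 0 := by
      have h7 : ((2:ℕ) ^ (β - 1)) * 2 = 2 ^ β := by rw [← pow_succ]; congr 1; omega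
      calc c * 2 = (((2 ^ (β - 1) * 2 : ℕ)) : ZMod (2 ^ β)) := by rw [hc]; push_cast; ring
        _ = ((2 ^ β : ℕ) : ZMod (2 ^ β)) := by rw [h7]
        _ = 0 := ZMod.natCast_self _
    have hcc : -c = c := by linear_combination (-1 : ZMod (2^β)) * hc2
    have hval : ∀ t : ℤ, (((2:ℤ) ^ (β - 1) * t : ℤ) : ZMod (2 ^ β)) = 0 ∨
        (((2:ℤ) ^ (β - 1) * t : ℤ) : ZMod (2 ^ β)) = c := by
      intro t
      rcases Int.even_or_odd t with ⟨s, hs⟩ | ⟨s, hs⟩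
      · left
        rw [ZMod.intCast_zmod_eq_zero_iff_dvd]
        refine ⟨s, ?_⟩
        push_cast
        rw [hββ, hs]; ring
      · right
        have h8 : ((((2:ℤ) ^ (β - 1) * t - 2 ^ (β-1) : ℤ)) : ZMod (2 ^ β)) = 0 := by
          rw [ZMod.intCast_zmod_eq_zero_iff_dvd]
          refine ⟨s, ?_⟩
          push_cast
          rw [hββ, hs]; ring
        rw [Int.cast_sub] at h8
        have h9 : (((2:ℤ)^(β-1) : ℤ) : ZMod (2^β)) = c := by rw [hc]; push_cast; ring
        linear_combination h8 + h9
    rcases hkey with ⟨t, ht⟩ | ⟨t, ht⟩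
    · have hxy : x - y = (((2:ℤ) ^ (β - 1) * t : ℤ) : ZMod (2 ^ β)) := by
        rw [← ht]
        push_cast [aux_intCast_val hp]
        rw [hX, hY, aux_intCast_val hp, aux_intCast_val hp]
      rcases hval t with h | h
      · left
        rw [h] at hxy
        linear_combination -hxy
      · rw [h] at hxy
        exact Or.inr ⟨rfl, Or.inr (Or.inl (by linear_combination (-1 : ZMod (2^β)) * hxy - hc2))⟩
    · have hxy : x + y = (((2:ℤ) ^ (β - 1) * t : ℤ) : ZMod (2 ^ β)) := by
        rw [← ht]
        push_cast [aux_intCast_val hp]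
        rw [hX, hY, aux_intCast_val hp, aux_intCast_val hp]
      rcases hval t with h | h
      · rw [h] at hxy
        exact Or.inr ⟨rfl, Or.inl (by linear_combination hxy)⟩
      · rw [h] at hxy
        exact Or.inr ⟨rfl, Or.inr (Or.inr (by linear_combination hxy))⟩
  · -- p odd
    left
    have hpXY : ¬ (p : ℤ) ∣ X + Y := by
      intro h
      have h2U : (p : ℤ) ∣ 2 * U := by
        have : (2:ℤ) * U = (X + Y) - (X - U) - (Y - U) := by ring
        rw [this]
        exact dvd_sub (dvd_sub h hpX) hpY
      rcases hpprime.dvd_mul.mp h2U with h | h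
      · have h2 : p ∣ 2 := by exact_mod_cast h
        exact hp2 ((Nat.prime_dvd_prime_iff_eq hp Nat.prime_two).mp h2)
      · exact hpU h
    have hcop : IsCoprime ((p:ℤ) ^ β) (X + Y) :=
      ((hpprime.coprime_iff_not_dvd).mpr hpXY).pow_left
    have := hcop.dvd_of_dvd_mul_right hdvd
    exact (aux_eq_of_dvd hp this).symm


lemma aux_cop {p : ℕ} (hp : p.Prime) {x y : ℤ} (h : IsCoprime x y)
    (hx : (p : ℤ) ∣ x) (hy : (p : ℤ) ∣ y) : False := by
  obtain ⟨s, t, hst⟩ := h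
  have h1 : (p : ℤ) ∣ 1 := by
    rw [← hst]; exact dvd_add (hx.mul_left s) (hy.mul_left t)
  have h2 := Int.le_of_dvd one_pos h1
  have h3 := hp.two_le
  omega

lemma aux_coord {p : ℕ} (hp : p.Prime) {α β : ℕ} (h : α ≤ β) (x y : ZMod (p ^ β))
    (hcast : ZMod.castHom (pow_dvd_pow p h) (ZMod (p ^ α)) x
      = ZMod.castHom (pow_dvd_pow p h) (ZMod (p ^ α)) y)
    (hdiv : x.val / p ^ α = y.val / p ^ α) : x = y := by
  haveI := aux_nezero hp β
  have h1 : x.val % p ^ α = y.val % p ^ α := by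
    rw [← aux_cast_val hp h, ← aux_cast_val hp h, hcast]
  have h2 := Nat.div_add_mod x.val (p ^ α)
  have h3 := Nat.div_add_mod y.val (p ^ α)
  rw [hdiv, h1] at h2
  exact ZMod.val_injective _ (by omega)
  
lemma aux_quot_lt {p : ℕ} (hp : p.Prime) {α β : ℕ} (h : α ≤ β) (x : ZMod (p ^ β)) :
    x.val / p ^ α < p ^ (β - α) := by
  haveI := aux_nezero hp β
  have h1 : x.val < p ^ β := ZMod.val_lt x
  have h2 : p ^ β = p ^ α * p ^ (β - α) := by rw [← pow_add]; congr 1; omega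
  refine Nat.div_lt_of_lt_mul ?_
  omega

lemma card_ne_one (i : Fin 4) : Fintype.card {k : Fin 4 // k ≠ i} = 3 := by
  simp [Fintype.card_subtype_compl]

lemma card_ne_two {i j : Fin 4} (hij : i ≠ j) :
    Fintype.card {k : Fin 4 // k ≠ i ∧ k ≠ j} = 2 := by
  rw [Fintype.card_subtype]
  have : (Finset.univ.filter fun k : Fin 4 => k ≠ i ∧ k ≠ j)
      = Finset.univ \ {i, j} := by
    ext k; simp [not_or]
  rw [this, Finset.card_sdiff_of_subset (by simp)]
  rw [Finset.card_insert_of_notMem (by simp [hij]), Finset.card_singleton]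
  simp

lemma exists_two {p : ℕ} (hp : p.Prime) {α : ℕ} (hα : 1 ≤ α)
    (a b : Fin 4 → ℤ) (hcop : ∀ i, IsCoprime (a i) (b i))
    (u : Fin 4 → ZMod (p ^ α))
    (hu : ¬ ∀ i, (p : ZMod (p ^ α)) ∣ u i)
    (hQ1 : ∑ i, (a i : ZMod (p ^ α)) * u i ^ 2 = 0)
    (hQ2 : ∑ i, (b i : ZMod (p ^ α)) * u i ^ 2 = 0) :
    ∃ i j, i ≠ j ∧ ¬ (p : ZMod (p ^ α)) ∣ u i ∧ ¬ (p : ZMod (p ^ α)) ∣ u j := by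
  haveI := aux_nezero hp α
  haveI : Fact p.Prime := ⟨hp⟩
  push_neg at hu
  obtain ⟨i, hi⟩ := hu
  by_contra hcon
  push_neg at hcon
  have hall : ∀ j, j ≠ i → (p : ZMod (p ^ α)) ∣ u j := by
    intro j hj
    exact hcon i j (fun h => hj h.symm) hi
  set π : ZMod (p ^ α) →+* ZMod p := ZMod.castHom (dvd_pow_self p (by omega)) (ZMod p) with hπ
  have hπ0 : ∀ j, j ≠ i → π (u j) = 0 := by
    intro j hj
    obtain ⟨t, ht⟩ := hall j hj
    rw [ht, map_mul, map_natCast, ZMod.natCast_self, zero_mul]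
  have hπi : π (u i) ≠ 0 := by
    intro h0
    apply hi
    rw [aux_dvd_iff hp hα]
    have hv : (((u i).val : ℕ) : ZMod p) = 0 := by
      rw [ZMod.natCast_val]
      rw [hπ, ZMod.castHom_apply] at h0
      exact h0
    exact (ZMod.natCast_eq_zero_iff _ _).mp hv
  have key : ∀ (cc : Fin 4 → ℤ), (∑ k, (cc k : ZMod (p ^ α)) * u k ^ 2 = 0) → (p : ℤ) ∣ cc i := by
    intro cc hcc
    have h1 : ∑ k, (cc k : ZMod p) * (π (u k)) ^ 2 = 0 := by
      have h2 := congrArg π hcc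
      rw [map_sum, map_zero] at h2
      rw [← h2]
      refine Finset.sum_congr rfl fun k _ => ?_
      rw [map_mul, map_pow, map_intCast]
    rw [Fintype.sum_eq_single i (fun k hk => by rw [hπ0 k hk]; ring)] at h1
    have h2 : ((cc i : ℤ) : ZMod p) = 0 := by
      rcases mul_eq_zero.mp h1 with h | h
      · exact h
      · exact absurd ((pow_eq_zero_iff two_ne_zero).mp h) hπi
    exact (ZMod.intCast_zmod_eq_zero_iff_dvd _ _).mp h2
  exact aux_cop hp (hcop i) (key a hQ1) (key b hQ2)

/-- Lemma 3.3 (lem:loc) of the paper. -/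
theorem stmt12
    (a b : Fin 4 → ℤ)
    (hcop : ∀ i, IsCoprime (a i) (b i))
    (hprop : ∀ i j, i ≠ j → a i * b j - a j * b i ≠ 0)
    (p : ℕ) (hp : p.Prime) (α β : ℕ) (hα : 1 ≤ α) (hαβ : α < β)
    (u : Fin 4 → ZMod (p ^ α))
    (hu : ¬ ∀ i, (p : ZMod (p ^ α)) ∣ u i)
    (hQ1 : ∑ i, (a i : ZMod (p ^ α)) * u i ^ 2 = 0)
    (hQ2 : ∑ i, (b i : ZMod (p ^ α)) * u i ^ 2 = 0) :
    (¬ pDvdDelta a b p →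
      Set.ncard {v : Fin 4 → ZMod (p ^ β) |
        (∑ i, (a i : ZMod (p ^ β)) * v i ^ 2 = 0) ∧
        (∑ i, (b i : ZMod (p ^ β)) * v i ^ 2 = 0) ∧
        (fun i => ZMod.castHom (pow_dvd_pow p hαβ.le) (ZMod (p ^ α)) (v i)) = u} ≤
        p ^ (2 * (β - α))) ∧
    (pDvdDelta a b p →
      Set.ncard {v : Fin 4 → ZMod (p ^ β) |
        (∑ i, (a i : ZMod (p ^ β)) * v i ^ 2 = 0) ∧
        (∑ i, (b i : ZMod (p ^ β)) * v i ^ 2 = 0) ∧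
        (fun i => ZMod.castHom (pow_dvd_pow p hαβ.le) (ZMod (p ^ α)) (v i)) = u} ≤
        p ^ (2 * (if p = 2 then 1 else 0) + 3 * (β - α))) := by
  classical
  haveI := aux_nezero hp α
  haveI := aux_nezero hp β
  obtain ⟨i, j, hij, hui, huj⟩ := exists_two hp hα a b hcop u hu hQ1 hQ2
  constructor
  · -- p ∤ Δ
    intro hnd
    have hp2 : p ≠ 2 := fun h => hnd (Or.inl h)
    have hdet : ¬ (p : ℤ) ∣ (a i * b j - a j * b i) := fun h => hnd (Or.inr ⟨i, j, hij, h⟩)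
    refine le_trans (Set.ncard_le_ncard_of_injOn
      (fun v (k : {k : Fin 4 // k ≠ i ∧ k ≠ j}) =>
        (⟨(v k.1).val / p ^ α, aux_quot_lt hp hαβ.le _⟩ : Fin (p ^ (β - α))))
      (fun v _ => Set.mem_univ _) ?_ Set.finite_univ) ?_
    · rintro v ⟨hv1, hv2, hv3⟩ w ⟨hw1, hw2, hw3⟩ hvw
      have hcv : ∀ k, ZMod.castHom (pow_dvd_pow p hαβ.le) (ZMod (p ^ α)) (v k) = u k :=
        fun k => congrFun hv3 k
      have hcw : ∀ k, ZMod.castHom (pow_dvd_pow p hαβ.le) (ZMod (p ^ α)) (w k) = u k :=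
        fun k => congrFun hw3 k
      have hoff : ∀ k, k ≠ i → k ≠ j → v k = w k := by
        intro k hki hkj
        have h1 := congrArg Fin.val (congrFun hvw ⟨k, hki, hkj⟩)
        exact aux_coord hp hαβ.le _ _ (by rw [hcv k, hcw k]) h1
      have hpairsum : ∀ (cc : Fin 4 → ℤ), (∑ k, (cc k : ZMod (p ^ β)) * v k ^ 2 = 0) →
          (∑ k, (cc k : ZMod (p ^ β)) * w k ^ 2 = 0) →
          (cc i : ZMod (p ^ β)) * (v i ^ 2 - w i ^ 2)
            + (cc j : ZMod (p ^ β)) * (v j ^ 2 - w j ^ 2) = 0 := by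
        intro cc h1 h2
        have h3 : ∑ k, ((cc k : ZMod (p ^ β)) * v k ^ 2 - (cc k : ZMod (p ^ β)) * w k ^ 2)
            = 0 := by
          rw [Finset.sum_sub_distrib, h1, h2, sub_zero]
        have h4 : ∑ k ∈ ({i, j} : Finset (Fin 4)),
            ((cc k : ZMod (p ^ β)) * v k ^ 2 - (cc k : ZMod (p ^ β)) * w k ^ 2) = 0 := by
          rw [← h3]
          refine Finset.sum_subset (Finset.subset_univ _) fun k _ hk => ?_
          have hki : k ≠ i := fun h => hk (by simp [h])
          have hkj : k ≠ j := fun h => hk (by simp [h])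
          rw [hoff k hki hkj]; ring
        rw [Finset.sum_pair hij] at h4
        linear_combination h4
      have hA := hpairsum a hv1 hw1
      have hB := hpairsum b hv2 hw2
      have hdi : ((a i * b j - a j * b i : ℤ) : ZMod (p ^ β)) * (v i ^ 2 - w i ^ 2) = 0 := by
        push_cast
        linear_combination (b j : ZMod (p ^ β)) * hA - (a j : ZMod (p ^ β)) * hB
      have hdj : ((a i * b j - a j * b i : ℤ) : ZMod (p ^ β)) * (v j ^ 2 - w j ^ 2) = 0 := by
        push_cast
        linear_combination (a i : ZMod (p ^ β)) * hB - (b i : ZMod (p ^ β)) * hA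
      have hu1 := aux_isUnit (β := β) hp hdet
      have hvi : v i ^ 2 = w i ^ 2 := by
        have h5 := (IsUnit.mul_right_eq_zero hu1).mp hdi
        linear_combination h5
      have hvj : v j ^ 2 = w j ^ 2 := by
        have h5 := (IsUnit.mul_right_eq_zero hu1).mp hdj
        linear_combination h5
      have hEi : v i = w i := by
        rcases key_sqrt hp hα hαβ hui (hcv i) (hcw i) hvi with h | ⟨h2, _⟩
        · exact h.symm
        · exact absurd h2 hp2
      have hEj : v j = w j := by
        rcases key_sqrt hp hα hαβ huj (hcv j) (hcw j) hvj with h | ⟨h2, _⟩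
        · exact h.symm
        · exact absurd h2 hp2
      funext k
      by_cases hki : k = i
      · subst hki; exact hEi
      by_cases hkj : k = j
      · subst hkj; exact hEj
      exact hoff k hki hkj
    · rw [Set.ncard_univ, Nat.card_eq_fintype_card, Fintype.card_fun, card_ne_two hij,
        Fintype.card_fin, ← pow_mul]
      apply le_of_eq
      congr 1
      ring
  · -- p ∣ Δ
    intro _
    have hab : ¬ ((p : ℤ) ∣ a i ∧ (p : ℤ) ∣ b i) := fun h => aux_cop hp (hcop i) h.1 h.2
    set cc : Fin 4 → ℤ := if (p : ℤ) ∣ a i then b else a with hcc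
    have hc_or : cc = a ∨ cc = b := by
      by_cases h : (p : ℤ) ∣ a i <;> simp [hcc, h]
    have hci : ¬ (p : ℤ) ∣ cc i := by
      by_cases h : (p : ℤ) ∣ a i
      · simp only [hcc, if_pos h]; exact fun hb => hab ⟨h, hb⟩
      · simp only [hcc, if_neg h]; exact h
    rw [Set.ncard_eq_toFinset_card', Set.toFinset_setOf]
    set T := Finset.univ.filter (fun v : Fin 4 → ZMod (p ^ β) =>
        (∑ k, (a k : ZMod (p ^ β)) * v k ^ 2 = 0) ∧
        (∑ k, (b k : ZMod (p ^ β)) * v k ^ 2 = 0) ∧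
        (fun k => ZMod.castHom (pow_dvd_pow p hαβ.le) (ZMod (p ^ α)) (v k)) = u) with hT
    set Φ : (Fin 4 → ZMod (p ^ β)) → ({k : Fin 4 // k ≠ i} → Fin (p ^ (β - α))) :=
      fun v k => (⟨(v k.1).val / p ^ α, aux_quot_lt hp hαβ.le _⟩ : Fin (p ^ (β - α))) with hΦ
    have hpair : ∀ v ∈ T, ∀ w ∈ T, Φ v = Φ w →
        (∀ k, k ≠ i → v k = w k) ∧ v i ^ 2 = w i ^ 2 := by
      intro v hv w hw hvw
      rw [hT, Finset.mem_filter] at hv hw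
      obtain ⟨-, hv1, hv2, hv3⟩ := hv
      obtain ⟨-, hw1, hw2, hw3⟩ := hw
      have hcv : ∀ k, ZMod.castHom (pow_dvd_pow p hαβ.le) (ZMod (p ^ α)) (v k) = u k :=
        fun k => congrFun hv3 k
      have hcw : ∀ k, ZMod.castHom (pow_dvd_pow p hαβ.le) (ZMod (p ^ α)) (w k) = u k :=
        fun k => congrFun hw3 k
      have hoff : ∀ k, k ≠ i → v k = w k := by
        intro k hk
        have h1 := congrArg Fin.val (congrFun hvw ⟨k, hk⟩)
        exact aux_coord hp hαβ.le _ _ (by rw [hcv k, hcw k]) h1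
      refine ⟨hoff, ?_⟩
      have hvc : ∑ k, (cc k : ZMod (p ^ β)) * v k ^ 2 = 0 := by
        rcases hc_or with h | h <;> rw [h] <;> assumption
      have hwc : ∑ k, (cc k : ZMod (p ^ β)) * w k ^ 2 = 0 := by
        rcases hc_or with h | h <;> rw [h] <;> assumption
      have h4 : ∑ k, ((cc k : ZMod (p ^ β)) * v k ^ 2 - (cc k : ZMod (p ^ β)) * w k ^ 2)
          = 0 := by
        rw [Finset.sum_sub_distrib, hvc, hwc, sub_zero]
      rw [Fintype.sum_eq_single i (fun k hk => by rw [hoff k hk]; ring)] at h4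
      have hu1 := aux_isUnit (β := β) hp hci
      have h5 := (IsUnit.mul_right_eq_zero hu1).mp (by linear_combination h4 :
        ((cc i : ℤ) : ZMod (p ^ β)) * (v i ^ 2 - w i ^ 2) = 0)
      linear_combination h5
    have hmain : T.card ≤ (if p = 2 then 4 else 1) * (T.image Φ).card := by
      refine Finset.card_le_mul_card_image T _ fun z hz => ?_
      rcases Finset.eq_empty_or_nonempty (T.filter fun v => Φ v = z) with he | ⟨v₀, hv₀⟩
      · rw [he, Finset.card_empty]; exact Nat.zero_le _
      by_cases hp2 : p = 2
      · rw [if_pos hp2]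
        have hT₀ := (Finset.mem_filter.mp hv₀).1
        have hz₀ := (Finset.mem_filter.mp hv₀).2
        have hcv₀ : ∀ k, ZMod.castHom (pow_dvd_pow p hαβ.le) (ZMod (p ^ α)) (v₀ k) = u k := by
          have := (Finset.mem_filter.mp (hT ▸ hT₀)).2.2.2
          exact fun k => congrFun this k
        set c2 : ZMod (p ^ β) := ((2 ^ (β - 1) : ℕ) : ZMod (p ^ β)) with hc2
        have hsub : (T.filter fun v => Φ v = z) ⊆
            {v₀, Function.update v₀ i (- v₀ i), Function.update v₀ i (v₀ i + c2),
              Function.update v₀ i (- v₀ i + c2)} := by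
          intro v hv
          have hTv := (Finset.mem_filter.mp hv).1
          have hzv := (Finset.mem_filter.mp hv).2
          have hcv : ∀ k, ZMod.castHom (pow_dvd_pow p hαβ.le) (ZMod (p ^ α)) (v k) = u k := by
            have := (Finset.mem_filter.mp (hT ▸ hTv)).2.2.2
            exact fun k => congrFun this k
          obtain ⟨hoff, hsq⟩ := hpair v₀ hT₀ v hTv (by rw [hz₀, hzv])
          have hk := key_sqrt hp hα hαβ hui (hcv₀ i) (hcv i) hsq
          have hvup : ∀ z', v i = z' → v = Function.update v₀ i z' := by
            intro z' hz'
            funext k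
            by_cases hk' : k = i
            · subst hk'; rw [Function.update_self]; exact hz'
            · rw [Function.update_of_ne hk']; exact (hoff k hk').symm
          simp only [Finset.mem_insert, Finset.mem_singleton]
          rcases hk with h | ⟨-, h | h | h⟩
          · left; rw [hvup _ h, Function.update_eq_self]
          · right; left; exact hvup _ h
          · right; right; left; exact hvup _ h
          · right; right; right; exact hvup _ h
        refine le_trans (Finset.card_le_card hsub) ?_
        have a1 := Finset.card_insert_le v₀ ({Function.update v₀ i (- v₀ i),
          Function.update v₀ i (v₀ i + c2), Function.update v₀ i (- v₀ i + c2)} :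
          Finset (Fin 4 → ZMod (p ^ β)))
        have a2 := Finset.card_insert_le (Function.update v₀ i (- v₀ i))
          ({Function.update v₀ i (v₀ i + c2), Function.update v₀ i (- v₀ i + c2)} :
          Finset (Fin 4 → ZMod (p ^ β)))
        have a3 := Finset.card_insert_le (Function.update v₀ i (v₀ i + c2))
          ({Function.update v₀ i (- v₀ i + c2)} : Finset (Fin 4 → ZMod (p ^ β)))
        have a4 : ({Function.update v₀ i (- v₀ i + c2)} :
          Finset (Fin 4 → ZMod (p ^ β))).card = 1 := Finset.card_singleton _
        omega
      · rw [if_neg hp2]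
        rw [Finset.card_le_one]
        intro v hv w hw
        have hTv := (Finset.mem_filter.mp hv).1
        have hTw := (Finset.mem_filter.mp hw).1
        have hcv : ∀ k, ZMod.castHom (pow_dvd_pow p hαβ.le) (ZMod (p ^ α)) (v k) = u k := by
          have := (Finset.mem_filter.mp (hT ▸ hTv)).2.2.2
          exact fun k => congrFun this k
        have hcw : ∀ k, ZMod.castHom (pow_dvd_pow p hαβ.le) (ZMod (p ^ α)) (w k) = u k := by
          have := (Finset.mem_filter.mp (hT ▸ hTw)).2.2.2
          exact fun k => congrFun this k
        obtain ⟨hoff, hsq⟩ := hpair v hTv w hTw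
          (by rw [(Finset.mem_filter.mp hv).2, (Finset.mem_filter.mp hw).2])
        have hEi : v i = w i := by
          rcases key_sqrt hp hα hαβ hui (hcv i) (hcw i) hsq with h | ⟨h2, -⟩
          · exact h.symm
          · exact absurd h2 hp2
        funext k
        by_cases hk' : k = i
        · subst hk'; exact hEi
        · exact hoff k hk'
    have himg : (T.image Φ).card ≤ (p ^ (β - α)) ^ 3 := by
      refine le_trans (Finset.card_le_univ _) ?_
      rw [Fintype.card_fun, card_ne_one, Fintype.card_fin]
    refine le_trans hmain (le_trans (Nat.mul_le_mul_left _ himg) ?_)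
    by_cases hp2 : p = 2
    · subst hp2
      rw [if_pos rfl]
      apply le_of_eq
      rw [← pow_mul, pow_add]
      norm_num [mul_comm]
    · rw [if_neg hp2]
      rw [one_mul, ← pow_mul]
      apply le_of_eq
      congr 1
      simp [hp2]
      ring
end
end

section
/- There is a constant C, depending only on L₁,…,L₄, such that for every δ ≥ 0, every i₁ ∈ {1,2,3,4} and all S, R ≥ 1, #{x ∈ ℤ²_prim : S ≤ |x| < 2S, R ≤ |L_{i₁}(x)| < 2R, L₁(x)L₂(x)L₃(x)L₄(x) ≠ 0, Δ_bad(x) > (S·R)^δ} ≤ C·(S·R)^{1 − δ/8}. -/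
open scoped BigOperators

noncomputable section

/-- Sup norm of an integer vector. -/
def supNorm {n : ℕ} (x : Fin n → ℤ) : ℕ := Finset.univ.sup fun i => (x i).natAbs

/-- The binary linear form `L i (x) = a i * x₁ + b i * x₂`. -/
def Lf (a b : Fin 4 → ℤ) (i : Fin 4) (x : Fin 2 → ℤ) : ℤ := a i * x 0 + b i * x 1

/-- Primitive integer vectors: the gcd of the coordinates is 1. -/
def IsPrim {n : ℕ} (x : Fin n → ℤ) : Prop := Finset.univ.gcd x = 1

/-- The square-full part of a nonzero integer: `∏_{p^e ∥ m, e ≥ 2} p^e`. -/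
def badPart (m : ℤ) : ℕ :=
  ∏ p ∈ m.natAbs.primeFactors,
    if 2 ≤ m.natAbs.factorization p then p ^ m.natAbs.factorization p else 1

/- ## auxiliary counting lemma for covers -/
lemma ncard_le_sum_of_cover {ι β : Type*} (F : Finset ι) (𝒜 : ι → Set β)
    (hfin : ∀ q ∈ F, (𝒜 q).Finite) (𝒮 : Set β) (hc : 𝒮 ⊆ ⋃ q ∈ F, 𝒜 q) :
    (𝒮.ncard : ℝ) ≤ ∑ q ∈ F, ((𝒜 q).ncard : ℝ) := by
  classical
  set GF : Finset β := F.attach.biUnion (fun q => (hfin q.1 q.2).toFinset) with hGF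
  have hsub : 𝒮 ⊆ ↑GF := by
    intro x hx
    obtain ⟨s, ⟨q, rfl⟩, hs2⟩ := hc hx
    simp only [Set.mem_iUnion, exists_prop] at hs2
    obtain ⟨hqF, hq⟩ := hs2
    rw [hGF, Finset.coe_biUnion]
    refine Set.mem_biUnion (Finset.mem_coe.mpr (Finset.mem_attach _ ⟨q, hqF⟩)) ?_
    exact (Set.Finite.mem_toFinset _).mpr hq
  have h1 : 𝒮.ncard ≤ GF.card := by
    rw [← Set.ncard_coe_finset GF]
    exact Set.ncard_le_ncard hsub GF.finite_toSet
  have h2 : GF.card ≤ ∑ q ∈ F.attach, ((hfin q.1 q.2).toFinset).card :=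
    Finset.card_biUnion_le
  have h3 : ∑ q ∈ F.attach, ((hfin q.1 q.2).toFinset).card
      = ∑ q ∈ F.attach, (𝒜 q.1).ncard := by
    apply Finset.sum_congr rfl
    intro q _
    rw [← Set.ncard_coe_finset, Set.Finite.coe_toFinset]
  have h4 : ∑ q ∈ F.attach, (𝒜 q.1).ncard = ∑ q ∈ F, (𝒜 q).ncard := by
    exact Finset.sum_attach F (fun q => (𝒜 q).ncard)
  have : (𝒮.ncard : ℕ) ≤ ∑ q ∈ F, (𝒜 q).ncard := by omega
  calc (𝒮.ncard : ℝ) ≤ ((∑ q ∈ F, (𝒜 q).ncard : ℕ) : ℝ) := by exact_mod_cast this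
    _ = ∑ q ∈ F, ((𝒜 q).ncard : ℝ) := by push_cast; rfl

/- ## badPart basics -/
lemma one_le_badPart (m : ℤ) : 1 ≤ badPart m := by
  apply Nat.one_le_iff_ne_zero.mpr
  apply Finset.prod_ne_zero_iff.mpr
  intro p hp
  have hp' : 0 < p := (Nat.prime_of_mem_primeFactors hp).pos
  split
  · positivity
  · exact one_ne_zero

lemma prod_pow_fact (n : ℕ) (hn : n ≠ 0) :
    ∏ p ∈ n.primeFactors, p ^ n.factorization p = n := by
  have := Nat.factorization_prod_pow_eq_self hn
  rwa [Finsupp.prod, Nat.support_factorization] at this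

lemma badPart_dvd_natAbs (m : ℤ) (hm : m ≠ 0) : badPart m ∣ m.natAbs := by
  rw [← prod_pow_fact m.natAbs (Int.natAbs_ne_zero.mpr hm)]
  apply Finset.prod_dvd_prod_of_dvd
  intro p _
  split
  · exact dvd_rfl
  · exact one_dvd _

lemma badPart_dvd (m : ℤ) (hm : m ≠ 0) : (badPart m : ℤ) ∣ m := by
  have := Int.natCast_dvd_natCast.mpr (badPart_dvd_natAbs m hm)
  exact dvd_trans this (Int.natAbs_dvd.mpr dvd_rfl)

lemma badPart_le_natAbs (m : ℤ) (hm : m ≠ 0) : badPart m ≤ m.natAbs :=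
  Nat.le_of_dvd (Int.natAbs_pos.mpr hm) (badPart_dvd_natAbs m hm)

/-- squarefull decomposition of badPart -/
lemma badPart_decomp (m : ℤ) : ∃ s t : ℕ, 1 ≤ s ∧ 1 ≤ t ∧ s ^ 2 * t ^ 3 = badPart m := by
  classical
  set n := m.natAbs
  refine ⟨∏ p ∈ n.primeFactors, p ^ (if 2 ≤ n.factorization p then
      (if Odd (n.factorization p) then (n.factorization p - 3)/2 else n.factorization p / 2)
      else 0),
    ∏ p ∈ n.primeFactors, p ^ (if 2 ≤ n.factorization p then
      (if Odd (n.factorization p) then 1 else 0) else 0), ?_, ?_, ?_⟩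
  · apply Nat.one_le_iff_ne_zero.mpr; apply Finset.prod_ne_zero_iff.mpr
    intro p hp; exact pow_ne_zero _ (Nat.prime_of_mem_primeFactors hp).pos.ne'
  · apply Nat.one_le_iff_ne_zero.mpr; apply Finset.prod_ne_zero_iff.mpr
    intro p hp; exact pow_ne_zero _ (Nat.prime_of_mem_primeFactors hp).pos.ne'
  · rw [← Finset.prod_pow, ← Finset.prod_pow, ← Finset.prod_mul_distrib]
    apply Finset.prod_congr rfl
    intro p hp
    rw [← pow_mul, ← pow_mul, ← pow_add]
    set e := n.factorization p with he
    by_cases h2 : 2 ≤ e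
    · simp only [if_pos h2]
      by_cases ho : Odd e
      · simp only [if_pos ho]
        congr 1
        obtain ⟨k, hk⟩ := ho
        omega
      · simp only [if_neg ho]
        congr 1
        rcases Nat.even_or_odd e with he' | he'
        · obtain ⟨k, hk⟩ := he'; omega
        · exact absurd he' ho
    · simp [if_neg h2]

/- ## elementary sum estimates -/
lemma sum_sq_inv_aux (n : ℕ) (hn : 1 ≤ n) : ∀ N : ℕ,
    ∑ s ∈ Finset.Icc n N, (1:ℝ)/(s:ℝ)^2 ≤ 2/(n:ℝ) - 1/((max N n : ℕ) : ℝ) := by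
  intro N
  have hn' : (0:ℝ) < n := by exact_mod_cast hn
  induction N with
  | zero =>
      rw [Finset.Icc_eq_empty (by omega), show max 0 n = n by omega]
      simp only [Finset.sum_empty]
      rw [sub_nonneg]
      gcongr
      · norm_num
  | succ N ih =>
      rcases lt_trichotomy (N+1) n with h | h | h
      · rw [Finset.Icc_eq_empty (by omega), show max (N+1) n = n by omega]
        simp only [Finset.sum_empty]
        rw [sub_nonneg]
        gcongr
        · norm_num
      · rw [show Finset.Icc n (N+1) = {n} by rw [h]; simp, Finset.sum_singleton,
          show max (N+1) n = n by omega]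
        rw [div_sub_div _ _ (by positivity) (by positivity),
          div_le_div_iff₀ (by positivity) (by positivity)]
        nlinarith [hn', (by exact_mod_cast hn : (1:ℝ) ≤ n)]
      · have hle : n ≤ N := by omega
        rw [← Finset.insert_Icc_right_eq_Icc_add_one (by omega), Finset.sum_insert (by simp),
          show max (N+1) n = N+1 by omega]
        rw [show max N n = N by omega] at ih
        have hN : (0:ℝ) < N := by exact_mod_cast lt_of_lt_of_le hn hle
        have key : (1:ℝ)/((N:ℝ)+1)^2 + 1/((N:ℝ)+1) ≤ 1/(N:ℝ) := by
          rw [div_add_div _ _ (by positivity) (by positivity),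
            div_le_div_iff₀ (by positivity) hN]
          nlinarith [hN]
        push_cast at ih key ⊢
        linarith

lemma sum_sq_inv (n N : ℕ) (hn : 1 ≤ n) :
    ∑ s ∈ Finset.Icc n N, (1:ℝ)/(s:ℝ)^2 ≤ 2/(n:ℝ) := by
  refine le_trans (sum_sq_inv_aux n hn N) ?_
  have h1 : (0:ℝ) < ((max N n : ℕ):ℝ) := by
    have : 1 ≤ max N n := le_trans hn (le_max_right _ _)
    exact_mod_cast this
  linarith [le_of_lt (div_pos one_pos h1)]

lemma sum_t32_aux : ∀ N : ℕ,
    ∑ t ∈ Finset.Icc 1 N, (1:ℝ)/((t:ℝ) * Real.sqrt t) ≤ 3 - 2/Real.sqrt ((max N 1 : ℕ)) := by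
  intro N
  induction N with
  | zero =>
      rw [Finset.Icc_eq_empty (by omega)]
      simp [Real.sqrt_one]
      norm_num
  | succ N ih =>
      rcases Nat.eq_zero_or_pos N with h | h
      · subst h
        rw [show Finset.Icc 1 1 = {1} by simp, Finset.sum_singleton]
        simp [Real.sqrt_one]
        norm_num
      · rw [← Finset.insert_Icc_right_eq_Icc_add_one (by omega), Finset.sum_insert (by simp),
          show max (N+1) 1 = N+1 by omega]
        rw [show max N 1 = N by omega] at ih
        set u := Real.sqrt N with hu
        set v := Real.sqrt (N+1) with hv
        have hN1 : (1:ℝ) ≤ N := by exact_mod_cast h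
        have hu1 : 1 ≤ u := by rw [hu, show (1:ℝ) = Real.sqrt 1 by simp]; exact Real.sqrt_le_sqrt hN1
        have hv0 : 0 < v := Real.sqrt_pos.mpr (by positivity)
        have hu0 : 0 < u := by linarith
        have huv : u ≤ v := Real.sqrt_le_sqrt (by linarith)
        have hu2 : u^2 = N := Real.sq_sqrt (by linarith)
        have hv2 : v^2 = (N:ℝ)+1 := Real.sq_sqrt (by linarith)
        have key : (1:ℝ)/(((N:ℝ)+1) * v) ≤ 2/u - 2/v := by
          rw [div_sub_div _ _ (by positivity) (by positivity),
            div_le_div_iff₀ (by positivity) (by positivity)]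
          have hdiff : (v - u) * (v + u) = 1 := by nlinarith
          nlinarith [mul_pos hu0 hv0, sq_nonneg (v-u), mul_pos hv0 hv0]
        have hcast : ((N:ℕ)+1:ℝ) = (N:ℝ)+1 := by push_cast; ring
        push_cast
        push_cast at ih
        rw [← hv]
        linarith

lemma sum_t32 (N : ℕ) : ∑ t ∈ Finset.Icc 1 N, (1:ℝ)/((t:ℝ) * Real.sqrt t) ≤ 3 := by
  refine le_trans (sum_t32_aux N) ?_
  have h1 : (0:ℝ) < Real.sqrt ((max N 1 : ℕ)) := Real.sqrt_pos.mpr (by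
    have : 1 ≤ max N 1 := le_max_right _ _
    exact_mod_cast this)
  linarith [le_of_lt (div_pos two_pos h1)]

lemma mySumInner (N t : ℕ) (ht : 1 ≤ t) (T : ℝ) (hT : 0 < T) :
    ∑ s ∈ Finset.Icc 1 N, (if T ≤ (s:ℝ)^2 * (t:ℝ)^3 then (1:ℝ)/((s:ℝ)^2*(t:ℝ)^3) else 0)
      ≤ 2 / (Real.sqrt T * (t:ℝ) * Real.sqrt t) := by
  have ht' : (0:ℝ) < t := by exact_mod_cast ht
  have hst : Real.sqrt t > 0 := Real.sqrt_pos.mpr ht'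
  have hsT : Real.sqrt T > 0 := Real.sqrt_pos.mpr hT
  have h3 : Real.sqrt t * Real.sqrt t = t := Real.mul_self_sqrt (by positivity)
  have hX : ∑ s ∈ Finset.Icc 1 N, (if T ≤ (s:ℝ)^2 * (t:ℝ)^3 then (1:ℝ)/((s:ℝ)^2*(t:ℝ)^3) else 0)
      = (1/(t:ℝ)^3) * ∑ s ∈ Finset.Icc 1 N, (if T ≤ (s:ℝ)^2 * (t:ℝ)^3 then (1:ℝ)/(s:ℝ)^2 else 0) := by
    rw [Finset.mul_sum]
    apply Finset.sum_congr rfl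
    intro s _
    split
    · rw [div_mul_div_comm, one_mul, mul_comm]
    · ring
  rw [hX]
  have hsqt : Real.sqrt ((t:ℝ)^3) = (t:ℝ) * Real.sqrt t := by
    rw [show ((t:ℝ))^3 = ((t:ℝ))^2 * t by ring, Real.sqrt_mul (by positivity),
      Real.sqrt_sq (by positivity)]
  have hbound : ∑ s ∈ Finset.Icc 1 N, (if T ≤ (s:ℝ)^2 * (t:ℝ)^3 then (1:ℝ)/(s:ℝ)^2 else 0)
      ≤ 2 * Real.sqrt ((t:ℝ)^3) / Real.sqrt T := by
    by_cases hc : T ≤ (t:ℝ)^3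
    · have h1 : ∑ s ∈ Finset.Icc 1 N, (if T ≤ (s:ℝ)^2 * (t:ℝ)^3 then (1:ℝ)/(s:ℝ)^2 else 0)
          ≤ ∑ s ∈ Finset.Icc 1 N, (1:ℝ)/(s:ℝ)^2 := by
        apply Finset.sum_le_sum
        intro s hs
        split
        · exact le_refl _
        · positivity
      have h2 := sum_sq_inv 1 N le_rfl
      have h4 : (2:ℝ) ≤ 2 * Real.sqrt ((t:ℝ)^3) / Real.sqrt T := by
        rw [le_div_iff₀ hsT]
        have : Real.sqrt T ≤ Real.sqrt ((t:ℝ)^3) := Real.sqrt_le_sqrt hc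
        nlinarith
      push_cast at h2
      linarith
    · push_neg at hc
      set A : ℝ := Real.sqrt (T / (t:ℝ)^3) with hA
      have hA1 : 1 < A := by
        rw [hA, show (1:ℝ) = Real.sqrt 1 by simp]
        apply Real.sqrt_lt_sqrt (by norm_num)
        rw [lt_div_iff₀ (by positivity)]
        linarith
      set n₀ : ℕ := ⌈A⌉₊ with hn₀
      have hn₀1 : 1 ≤ n₀ := by
        rw [hn₀]
        exact Nat.one_le_ceil_iff.mpr (by linarith)
      have hsub : ∑ s ∈ Finset.Icc 1 N, (if T ≤ (s:ℝ)^2 * (t:ℝ)^3 then (1:ℝ)/(s:ℝ)^2 else 0)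
          ≤ ∑ s ∈ Finset.Icc n₀ N, (1:ℝ)/(s:ℝ)^2 := by
        rw [← Finset.sum_filter]
        apply Finset.sum_le_sum_of_subset_of_nonneg
        · intro s hs
          rw [Finset.mem_filter, Finset.mem_Icc] at hs
          obtain ⟨⟨hs1, hs2⟩, hs3⟩ := hs
          rw [Finset.mem_Icc]
          refine ⟨?_, hs2⟩
          rw [hn₀, Nat.ceil_le]
          have hs' : (0:ℝ) ≤ s := by positivity
          have : A^2 ≤ (s:ℝ)^2 := by
            rw [hA, Real.sq_sqrt (by positivity)]
            rw [div_le_iff₀ (by positivity)]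
            linarith
          nlinarith [Real.sqrt_nonneg (T / (t:ℝ)^3)]
        · intro s _ _
          positivity
      have h2 := sum_sq_inv n₀ N hn₀1
      have hAle : A ≤ (n₀:ℝ) := Nat.le_ceil A
      have h5 : (2:ℝ)/(n₀:ℝ) ≤ 2/A := by
        apply div_le_div_of_nonneg_left (by norm_num) (by linarith) hAle
      have h6 : (2:ℝ)/A = 2 * Real.sqrt ((t:ℝ)^3) / Real.sqrt T := by
        rw [hA, Real.sqrt_div hT.le, div_div_eq_mul_div]
      linarith [hsub, h2, h5, h6.le, h6.ge]
  calc (1/(t:ℝ)^3) * ∑ s ∈ Finset.Icc 1 N, (if T ≤ (s:ℝ)^2 * (t:ℝ)^3 then (1:ℝ)/(s:ℝ)^2 else 0)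
      ≤ (1/(t:ℝ)^3) * (2 * Real.sqrt ((t:ℝ)^3) / Real.sqrt T) := by
        apply mul_le_mul_of_nonneg_left hbound (by positivity)
    _ = 2 / (Real.sqrt T * (t:ℝ) * Real.sqrt t) := by
        rw [hsqt, div_mul_div_comm, one_mul,
          div_eq_div_iff (by positivity) (by positivity)]
        linear_combination (2*(t:ℝ)^2*Real.sqrt T) * h3

lemma mySumST (N : ℕ) (T : ℝ) (hT : 0 < T) :
    ∑ q ∈ (Finset.Icc 1 N ×ˢ Finset.Icc 1 N).filter
        (fun q => T ≤ (q.1:ℝ)^2 * (q.2:ℝ)^3), (1:ℝ)/((q.1:ℝ)^2*(q.2:ℝ)^3)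
      ≤ 6 / Real.sqrt T := by
  rw [Finset.sum_filter, Finset.sum_product]
  rw [Finset.sum_comm]
  have hstep : ∀ t ∈ Finset.Icc 1 N,
      ∑ s ∈ Finset.Icc 1 N, (if T ≤ (s:ℝ)^2 * (t:ℝ)^3 then (1:ℝ)/((s:ℝ)^2*(t:ℝ)^3) else 0)
        ≤ 2 / (Real.sqrt T * (t:ℝ) * Real.sqrt t) := by
    intro t htm
    rw [Finset.mem_Icc] at htm
    exact mySumInner N t htm.1 T hT
  calc ∑ t ∈ Finset.Icc 1 N, ∑ s ∈ Finset.Icc 1 N,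
        (if T ≤ (s:ℝ)^2 * (t:ℝ)^3 then (1:ℝ)/((s:ℝ)^2*(t:ℝ)^3) else 0)
      ≤ ∑ t ∈ Finset.Icc 1 N, 2 / (Real.sqrt T * (t:ℝ) * Real.sqrt t) :=
        Finset.sum_le_sum hstep
    _ = (2/Real.sqrt T) * ∑ t ∈ Finset.Icc 1 N, (1:ℝ)/((t:ℝ) * Real.sqrt t) := by
        rw [Finset.mul_sum]
        apply Finset.sum_congr rfl
        intro t _
        rw [div_mul_div_comm, mul_one, mul_assoc]
    _ ≤ (2/Real.sqrt T) * 3 := by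
        apply mul_le_mul_of_nonneg_left (sum_t32 N) (by positivity)
    _ = 6 / Real.sqrt T := by ring

/- ## counting lemma -/
lemma count_lemma (a b : Fin 4 → ℤ) (i j : Fin 4)
    (hdet : a i * b j - a j * b i ≠ 0) (d : ℤ) (hd : 0 < d) (P Q : ℝ)
    (hP : 0 ≤ P) (hQ : 1 ≤ Q) :
    {x : Fin 2 → ℤ | d ∣ Lf a b i x ∧ Lf a b i x ≠ 0 ∧
      |(Lf a b i x : ℝ)| ≤ P ∧ |(Lf a b j x : ℝ)| ≤ Q}.Finite ∧
    (({x : Fin 2 → ℤ | d ∣ Lf a b i x ∧ Lf a b i x ≠ 0 ∧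
      |(Lf a b i x : ℝ)| ≤ P ∧ |(Lf a b j x : ℝ)| ≤ Q}.ncard : ℝ)) ≤ 6 * P * Q / d := by
  set 𝒜 := {x : Fin 2 → ℤ | d ∣ Lf a b i x ∧ Lf a b i x ≠ 0 ∧
      |(Lf a b i x : ℝ)| ≤ P ∧ |(Lf a b j x : ℝ)| ≤ Q} with h𝒜
  set M : ℤ := ⌊P / (d:ℝ)⌋ with hM
  set QI : ℤ := ⌊Q⌋ with hQI
  have hd' : (0:ℝ) < (d:ℝ) := by exact_mod_cast hd
  have hM0 : 0 ≤ M := Int.floor_nonneg.mpr (by positivity)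
  have hQI1 : 1 ≤ QI := Int.le_floor.mpr (by exact_mod_cast hQ)
  set G : Finset (ℤ × ℤ) := ((Finset.Icc (-M) M).erase 0) ×ˢ Finset.Icc (-QI) QI with hG
  set f : (Fin 2 → ℤ) → ℤ × ℤ := fun x => (Lf a b i x / d, Lf a b j x) with hf
  have himg : f '' 𝒜 ⊆ ↑G := by
    rintro _ ⟨x, hx, rfl⟩
    obtain ⟨hdvd, hne, hPb, hQb⟩ := hx
    have hdm : (Lf a b i x / d) * d = Lf a b i x := Int.ediv_mul_cancel hdvd
    have habs : |Lf a b i x / d| ≤ M := by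
      rw [hM, Int.le_floor]
      have h1 : ((|Lf a b i x / d| : ℤ) : ℝ) = |((Lf a b i x / d : ℤ) : ℝ)| := by push_cast; rfl
      rw [h1, le_div_iff₀ hd']
      have h2 : |((Lf a b i x / d : ℤ) : ℝ)| * (d:ℝ) = |((Lf a b i x : ℤ) : ℝ)| := by
        rw [← abs_of_pos hd', ← abs_mul]
        congr 1
        exact_mod_cast congrArg (Int.cast : ℤ → ℝ) hdm
      rw [h2]; exact hPb
    have habsQ : |Lf a b j x| ≤ QI := by
      rw [hQI, Int.le_floor]
      have h1 : ((|Lf a b j x| : ℤ) : ℝ) = |((Lf a b j x : ℤ) : ℝ)| := by push_cast; rfl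
      rw [h1]; exact hQb
    simp only [hG, Finset.coe_product, Set.mem_prod, Finset.mem_coe, Finset.mem_erase,
      Finset.mem_Icc, hf]
    obtain ⟨hm1, hm2⟩ := abs_le.mp habs
    obtain ⟨hq1, hq2⟩ := abs_le.mp habsQ
    refine ⟨⟨?_, hm1, hm2⟩, hq1, hq2⟩
    intro h0
    apply hne
    rw [← hdm, h0, zero_mul]
  have hinj : Set.InjOn f 𝒜 := by
    rintro x hx y hy hxy
    obtain ⟨hdx, -, -, -⟩ := hx
    obtain ⟨hdy, -, -, -⟩ := hy
    have h1 : Lf a b i x = Lf a b i y := by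
      have e1 : Lf a b i x / d = Lf a b i y / d := congrArg Prod.fst hxy
      rw [← Int.ediv_mul_cancel hdx, ← Int.ediv_mul_cancel hdy, e1]
    have h2 : Lf a b j x = Lf a b j y := congrArg Prod.snd hxy
    unfold Lf at h1 h2
    have e0 : x 0 = y 0 := by
      have : (a i * b j - a j * b i) * (x 0 - y 0) = 0 := by
        linear_combination b j * h1 - b i * h2
      rcases mul_eq_zero.mp this with h | h
      · exact absurd h hdet
      · linarith [sub_eq_zero.mp h]
    have e1 : x 1 = y 1 := by
      have : (a i * b j - a j * b i) * (x 1 - y 1) = 0 := by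
        linear_combination a i * h2 - a j * h1
      rcases mul_eq_zero.mp this with h | h
      · exact absurd h hdet
      · linarith [sub_eq_zero.mp h]
    funext k
    fin_cases k
    · exact e0
    · exact e1
  have hfinA : 𝒜.Finite := Set.Finite.of_finite_image ((G.finite_toSet).subset himg) hinj
  refine ⟨hfinA, ?_⟩
  have hcard : 𝒜.ncard ≤ G.card := by
    rw [← Set.ncard_image_of_injOn hinj, ← Set.ncard_coe_finset]
    exact Set.ncard_le_ncard himg G.finite_toSet
  have hGcard : (G.card : ℝ) ≤ (2 * (P / d)) * (2 * Q + 1) := by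
    have hzmem : (0:ℤ) ∈ Finset.Icc (-M) M := by simp [Finset.mem_Icc]; omega
    have hcardG : G.card = ((M - -M + 1).toNat - 1) * (QI - -QI + 1).toNat := by
      rw [hG, Finset.card_product, Finset.card_erase_of_mem hzmem, Int.card_Icc, Int.card_Icc]
      congr 1 <;> omega
    have e1 : ((M - -M + 1).toNat : ℤ) = 2*M+1 := by
      rw [Int.toNat_of_nonneg (by omega)]; ring
    have e2 : ((QI - -QI + 1).toNat : ℤ) = 2*QI+1 := by
      rw [Int.toNat_of_nonneg (by omega)]; ring
    have h1 : 1 ≤ (M - -M + 1).toNat := by omega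
    have hcast : (G.card : ℝ) = (2*(M:ℝ)+1 - 1) * (2*(QI:ℝ)+1) := by
      rw [hcardG]
      push_cast [Nat.cast_sub h1]
      have e1' : (((M - -M + 1).toNat : ℤ) : ℝ) = 2*(M:ℝ)+1 := by exact_mod_cast e1
      have e2' : (((QI - -QI + 1).toNat : ℤ) : ℝ) = 2*(QI:ℝ)+1 := by exact_mod_cast e2
      push_cast at e1' e2'
      rw [e1', e2']
    rw [hcast]
    have hMle : (M:ℝ) ≤ P / d := Int.floor_le _
    have hQle : (QI:ℝ) ≤ Q := Int.floor_le _
    have hM0' : (0:ℝ) ≤ M := by exact_mod_cast hM0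
    have hQ0' : (0:ℝ) ≤ QI := by exact_mod_cast (by omega : (0:ℤ) ≤ QI)
    nlinarith [hMle, hQle, hM0', hQ0', hQ]
  calc (𝒜.ncard : ℝ) ≤ (G.card : ℝ) := by exact_mod_cast hcard
    _ ≤ (2 * (P / d)) * (2 * Q + 1) := hGcard
    _ ≤ 6 * P * Q / d := by
        have h3Q : 2 * Q + 1 ≤ 3 * Q := by linarith
        have : (2 * (P / d)) * (2 * Q + 1) ≤ (2 * (P / d)) * (3 * Q) := by
          apply mul_le_mul_of_nonneg_left h3Q (by positivity)
        refine le_trans this (le_of_eq ?_)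
        field_simp
        ring

/- ## arithmetic core -/
lemma prim_coprime {x : Fin 2 → ℤ} (hx : IsPrim x) : IsCoprime (x 0) (x 1) := by
  rw [Int.isCoprime_iff_gcd_eq_one]
  have hd : (Int.gcd (x 0) (x 1) : ℤ) ∣ Finset.univ.gcd x := by
    apply Finset.dvd_gcd
    intro i _
    fin_cases i
    · exact Int.gcd_dvd_left _ _
    · exact Int.gcd_dvd_right _ _
  rw [hx] at hd
  have := Int.eq_one_of_dvd_one (by positivity) hd
  exact_mod_cast this

lemma prime_dvd_res (a b : Fin 4 → ℤ) (i j : Fin 4) {x : Fin 2 → ℤ} (hx : IsPrim x)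
    (p : ℕ) (hp : p.Prime) (h1 : (p:ℤ) ∣ Lf a b i x) (h2 : (p:ℤ) ∣ Lf a b j x) :
    (p:ℤ) ∣ a i * b j - a j * b i := by
  obtain ⟨u, v, huv⟩ := prim_coprime hx
  have e0 : (a i * b j - a j * b i) * x 0 = b j * Lf a b i x - b i * Lf a b j x := by
    unfold Lf; ring
  have e1 : (a i * b j - a j * b i) * x 1 = a i * Lf a b j x - a j * Lf a b i x := by
    unfold Lf; ring
  have d0 : (p:ℤ) ∣ (a i * b j - a j * b i) * x 0 :=
    e0 ▸ dvd_sub (Dvd.dvd.mul_left h1 _) (Dvd.dvd.mul_left h2 _)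
  have d1 : (p:ℤ) ∣ (a i * b j - a j * b i) * x 1 :=
    e1 ▸ dvd_sub (Dvd.dvd.mul_left h2 _) (Dvd.dvd.mul_left h1 _)
  have : (a i * b j - a j * b i)
      = u * ((a i * b j - a j * b i) * x 0) + v * ((a i * b j - a j * b i) * x 1) := by
    linear_combination (a i * b j - a j * b i) * huv.symm
  rw [this]
  exact dvd_add (Dvd.dvd.mul_left d0 _) (Dvd.dvd.mul_left d1 _)

def Disc (a b : Fin 4 → ℤ) : ℕ :=
  (∏ ij ∈ Finset.univ.offDiag, (a ij.1 * b ij.2 - a ij.2 * b ij.1)).natAbs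

lemma key1 (a b : Fin 4 → ℤ)
    (hprop : ∀ i j, i ≠ j → a i * b j - a j * b i ≠ 0)
    (x : Fin 2 → ℤ) (hx : IsPrim x) (hN : (∏ i, Lf a b i x) ≠ 0) :
    badPart (∏ i, Lf a b i x) ≤ (Disc a b)^4 * ∏ i, badPart (Lf a b i x) := by
  classical
  have hDne : Disc a b ≠ 0 := by
    unfold Disc
    rw [Int.natAbs_ne_zero]
    apply Finset.prod_ne_zero_iff.mpr
    intro ij hij
    exact hprop ij.1 ij.2 (Finset.mem_offDiag.mp hij).2.2
  have hLne : ∀ i, Lf a b i x ≠ 0 := by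
    intro i hi
    exact hN (Finset.prod_eq_zero (Finset.mem_univ i) hi)
  set n : ℕ := (∏ i, Lf a b i x).natAbs with hn
  have hnprod : n = ∏ i, (Lf a b i x).natAbs := by
    rw [hn]
    exact map_prod Int.natAbsHom (fun i => Lf a b i x) Finset.univ
  have hnne : n ≠ 0 := Int.natAbs_ne_zero.mpr hN
  have hnine : ∀ i, (Lf a b i x).natAbs ≠ 0 := fun i => Int.natAbs_ne_zero.mpr (hLne i)
  have hfact : ∀ p : ℕ, n.factorization p = ∑ i, (Lf a b i x).natAbs.factorization p := by
    intro p
    rw [hnprod, Nat.factorization_prod (fun i _ => hnine i)]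
    simp
  have hpt : ∀ p ∈ n.primeFactors,
      (if 2 ≤ n.factorization p then p ^ n.factorization p else 1)
        ≤ (if p ∣ Disc a b then p^4 else 1) *
          ∏ i, (if 2 ≤ (Lf a b i x).natAbs.factorization p
                then p ^ (Lf a b i x).natAbs.factorization p else 1) := by
    intro p hpmem
    have hp : p.Prime := Nat.prime_of_mem_primeFactors hpmem
    have hp1 : 1 ≤ p := hp.pos
    have hprodpos : 1 ≤ ∏ i, (if 2 ≤ (Lf a b i x).natAbs.factorization p
        then p ^ (Lf a b i x).natAbs.factorization p else 1) := by
      apply Nat.one_le_iff_ne_zero.mpr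
      apply Finset.prod_ne_zero_iff.mpr
      intro i _
      split
      · positivity
      · exact one_ne_zero
    by_cases hd : p ∣ Disc a b
    · rw [if_pos hd]
      split
      · calc p ^ n.factorization p = ∏ i, p ^ (Lf a b i x).natAbs.factorization p := by
              rw [hfact p, Finset.prod_pow_eq_pow_sum]
          _ ≤ ∏ i, (p * (if 2 ≤ (Lf a b i x).natAbs.factorization p
                then p ^ (Lf a b i x).natAbs.factorization p else 1)) := by
              apply Finset.prod_le_prod'
              intro i _
              set e := (Lf a b i x).natAbs.factorization p with he
              by_cases h2 : 2 ≤ e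
              · rw [if_pos h2]
                exact Nat.le_mul_of_pos_left _ hp.pos
              · rw [if_neg h2]
                calc p ^ e ≤ p ^ 1 := Nat.pow_le_pow_right hp.pos (by omega)
                  _ = p * 1 := by ring
          _ = p^4 * ∏ i, (if 2 ≤ (Lf a b i x).natAbs.factorization p
                then p ^ (Lf a b i x).natAbs.factorization p else 1) := by
              rw [Finset.prod_mul_distrib, Finset.prod_const]
              norm_num
      · exact Nat.one_le_iff_ne_zero.mpr
          (Nat.mul_ne_zero (by positivity) (Nat.one_le_iff_ne_zero.mp hprodpos))
    · rw [if_neg hd, one_mul]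
      have huniq : ∀ i j : Fin 4, i ≠ j → p ∣ (Lf a b i x).natAbs →
          p ∣ (Lf a b j x).natAbs → False := by
        intro i j hij hi hj
        have hi' : (p:ℤ) ∣ Lf a b i x :=
          (Int.natCast_dvd_natCast.mpr hi).trans (Int.natAbs_dvd.mpr dvd_rfl)
        have hj' : (p:ℤ) ∣ Lf a b j x :=
          (Int.natCast_dvd_natCast.mpr hj).trans (Int.natAbs_dvd.mpr dvd_rfl)
        have hres := prime_dvd_res a b i j hx p hp hi' hj'
        apply hd
        have hmem : (i, j) ∈ Finset.univ.offDiag :=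
          Finset.mem_offDiag.mpr ⟨Finset.mem_univ i, Finset.mem_univ j, hij⟩
        have hdp := Finset.dvd_prod_of_mem
          (fun ij : Fin 4 × Fin 4 => a ij.1 * b ij.2 - a ij.2 * b ij.1) hmem
        have : (p:ℤ) ∣ ∏ ij ∈ Finset.univ.offDiag, (a ij.1 * b ij.2 - a ij.2 * b ij.1) :=
          hres.trans hdp
        exact Int.natCast_dvd.mp this
      split
      · rename_i h2
        have hex : ∃ i₀, 1 ≤ (Lf a b i₀ x).natAbs.factorization p := by
          by_contra hno
          push_neg at hno
          have : n.factorization p = 0 := by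
            rw [hfact p]
            apply Finset.sum_eq_zero
            intro i _
            have := hno i
            omega
          omega
        obtain ⟨i₀, hi₀⟩ := hex
        have hzero : ∀ j, j ≠ i₀ → (Lf a b j x).natAbs.factorization p = 0 := by
          intro j hj
          by_contra hjn
          exact huniq i₀ j (Ne.symm hj) (Nat.dvd_of_factorization_pos (by omega))
            (Nat.dvd_of_factorization_pos hjn)
        have hv : n.factorization p = (Lf a b i₀ x).natAbs.factorization p := by
          rw [hfact p]
          rw [Finset.sum_eq_single i₀ (fun j _ hj => hzero j hj) (by simp)]
        rw [hv]
        have : ∏ i, (if 2 ≤ (Lf a b i x).natAbs.factorization p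
              then p ^ (Lf a b i x).natAbs.factorization p else 1)
            = (if 2 ≤ (Lf a b i₀ x).natAbs.factorization p
              then p ^ (Lf a b i₀ x).natAbs.factorization p else 1) := by
          apply Finset.prod_eq_single i₀
          · intro j _ hj
            rw [hzero j hj]
            simp
          · simp
        rw [this, if_pos (hv ▸ h2)]
      · exact hprodpos
  have hstep : badPart (∏ i, Lf a b i x)
      ≤ ∏ p ∈ n.primeFactors, ((if p ∣ Disc a b then p^4 else 1) *
          ∏ i, (if 2 ≤ (Lf a b i x).natAbs.factorization p
                then p ^ (Lf a b i x).natAbs.factorization p else 1)) := by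
    unfold badPart
    rw [← hn]
    exact Finset.prod_le_prod' hpt
  rw [Finset.prod_mul_distrib] at hstep
  have hw : ∏ p ∈ n.primeFactors, (if p ∣ Disc a b then p^4 else 1) ≤ (Disc a b)^4 := by
    rw [Finset.prod_ite, Finset.prod_const_one, mul_one]
    have : ∏ p ∈ n.primeFactors.filter (· ∣ Disc a b), p^4
        = (∏ p ∈ n.primeFactors.filter (· ∣ Disc a b), p)^4 := by
      rw [Finset.prod_pow]
    rw [this]
    apply Nat.pow_le_pow_left
    apply Nat.le_of_dvd (Nat.pos_of_ne_zero hDne)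
    have hsub : n.primeFactors.filter (· ∣ Disc a b) ⊆ (Disc a b).primeFactors := by
      intro p hpf
      rw [Finset.mem_filter] at hpf
      exact Nat.mem_primeFactors.mpr ⟨Nat.prime_of_mem_primeFactors hpf.1, hpf.2, hDne⟩
    exact dvd_trans (Finset.prod_dvd_prod_of_subset _ _ _ hsub) (Nat.prod_primeFactors_dvd _)
  have hswap : ∏ p ∈ n.primeFactors, ∏ i, (if 2 ≤ (Lf a b i x).natAbs.factorization p
        then p ^ (Lf a b i x).natAbs.factorization p else 1)
      = ∏ i, ∏ p ∈ n.primeFactors, (if 2 ≤ (Lf a b i x).natAbs.factorization p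
        then p ^ (Lf a b i x).natAbs.factorization p else 1) := Finset.prod_comm
  have hinner : ∀ i, ∏ p ∈ n.primeFactors, (if 2 ≤ (Lf a b i x).natAbs.factorization p
        then p ^ (Lf a b i x).natAbs.factorization p else 1) = badPart (Lf a b i x) := by
    intro i
    unfold badPart
    symm
    apply Finset.prod_subset
    · apply Nat.primeFactors_mono _ hnne
      rw [hnprod]
      exact Finset.dvd_prod_of_mem _ (Finset.mem_univ i)
    · intro p _ hpn
      have : (Lf a b i x).natAbs.factorization p = 0 := by
        rw [← Nat.support_factorization] at hpn
        exact Finsupp.notMem_support_iff.mp hpn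
      rw [this]
      simp
  calc badPart (∏ i, Lf a b i x)
      ≤ (∏ p ∈ n.primeFactors, (if p ∣ Disc a b then p^4 else 1)) *
        (∏ p ∈ n.primeFactors, ∏ i, (if 2 ≤ (Lf a b i x).natAbs.factorization p
          then p ^ (Lf a b i x).natAbs.factorization p else 1)) := hstep
    _ ≤ (Disc a b)^4 * ∏ i, badPart (Lf a b i x) := by
        apply Nat.mul_le_mul hw
        rw [hswap]
        apply le_of_eq
        exact Finset.prod_congr rfl (fun i _ => hinner i)

/-- Lemma 5.5 (lem:stain) of the paper. -/
theorem stmt16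
    (a b : Fin 4 → ℤ)
    (hcop : ∀ i, IsCoprime (a i) (b i))
    (hprop : ∀ i j, i ≠ j → a i * b j - a j * b i ≠ 0) :
    ∃ C : ℝ, 0 < C ∧ ∀ (δ : ℝ) (i₁ : Fin 4) (S R : ℝ), 0 ≤ δ → 1 ≤ S → 1 ≤ R →
      ((Set.ncard {x : Fin 2 → ℤ | IsPrim x ∧
          S ≤ (supNorm x : ℝ) ∧ (supNorm x : ℝ) < 2 * S ∧
          R ≤ |(Lf a b i₁ x : ℝ)| ∧ |(Lf a b i₁ x : ℝ)| < 2 * R ∧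
          (∏ i, Lf a b i x) ≠ 0 ∧
          (S * R) ^ δ < (badPart (∏ i, Lf a b i x) : ℝ)} : ℝ)) ≤
        C * (S * R) ^ ((1 : ℝ) - δ / 8) := by
  classical
  set A : ℕ := ∑ i, ((a i).natAbs + (b i).natAbs) with hA
  have hA1 : 1 ≤ A := by
    rw [hA]
    have h0 : 1 ≤ (a 0).natAbs + (b 0).natAbs := by
      by_contra h
      push_neg at h
      have ha : a 0 = 0 := by
        have : (a 0).natAbs = 0 := by omega
        exact Int.natAbs_eq_zero.mp this
      have hb : b 0 = 0 := by
        have : (b 0).natAbs = 0 := by omega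
        exact Int.natAbs_eq_zero.mp this
      have := hcop 0
      rw [ha, hb] at this
      exact (by simp : ¬ IsUnit (0:ℤ)) (isCoprime_zero_left.mp this)
    calc 1 ≤ (a 0).natAbs + (b 0).natAbs := h0
      _ ≤ ∑ i, ((a i).natAbs + (b i).natAbs) :=
        Finset.single_le_sum (f := fun i : Fin 4 => (a i).natAbs + (b i).natAbs)
          (fun i _ => Nat.zero_le _) (Finset.mem_univ 0)
  set D : ℕ := (Disc a b)^4 with hD
  have hDne : Disc a b ≠ 0 := by
    unfold Disc
    rw [Int.natAbs_ne_zero]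
    apply Finset.prod_ne_zero_iff.mpr
    intro ij hij
    exact hprop ij.1 ij.2 (Finset.mem_offDiag.mp hij).2.2
  have hD1 : 1 ≤ D := by
    rw [hD]
    exact Nat.one_le_iff_ne_zero.mpr (by positivity)
  have hA1' : (1:ℝ) ≤ (A:ℝ) := by exact_mod_cast hA1
  have hD1' : (1:ℝ) ≤ (D:ℝ) := by exact_mod_cast hD1
  have hD0' : (0:ℝ) < (D:ℝ) := by linarith
  refine ⟨576 * (A:ℝ) * (D:ℝ), by positivity, ?_⟩
  intro δ i₁ S R hδ hS hR
  have hS0 : (0:ℝ) < S := by linarith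
  have hR0 : (0:ℝ) < R := by linarith
  have hP₀ : (1:ℝ) ≤ S * R := by nlinarith
  have hP₀0 : (0:ℝ) < S * R := by linarith
  set T : ℝ := (S * R) ^ δ with hT
  have hT1 : (1:ℝ) ≤ T := Real.one_le_rpow hP₀ hδ
  have hT0 : (0:ℝ) < T := by linarith
  set T' : ℝ := (T / (D:ℝ)) ^ (4⁻¹ : ℝ) with hT'
  have hT'0 : 0 < T' := Real.rpow_pos_of_pos (div_pos hT0 hD0') _
  set N₀ : ℕ := ⌈2*(A:ℝ)*S + 2*R⌉₊ with hN₀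
  set jf : Fin 4 → Fin 4 := fun i => if i = i₁ then (if i₁ = 0 then 1 else 0) else i₁ with hjf
  have hjne : ∀ i, i ≠ jf i := by
    intro i
    rw [hjf]
    dsimp only
    by_cases h : i = i₁
    · rw [if_pos h]
      by_cases h0 : i₁ = 0
      · rw [if_pos h0, h, h0]; decide
      · rw [if_neg h0, h]; exact h0
    · rw [if_neg h]; exact h
  set P : Fin 4 → ℝ := fun i => if i = i₁ then 2*R else 2*(A:ℝ)*S with hP
  set Q : Fin 4 → ℝ := fun i => if i = i₁ then 2*(A:ℝ)*S else 2*R with hQ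
  have hPpos : ∀ i, 0 ≤ P i := by
    intro i; rw [hP]; dsimp only; split_ifs
    · linarith
    · nlinarith
  have hQ1 : ∀ i, 1 ≤ Q i := by
    intro i; rw [hQ]; dsimp only; split_ifs
    · nlinarith
    · linarith
  have hPQ : ∀ i, 6 * P i * Q i = 24*(A:ℝ)*S*R := by
    intro i; rw [hP, hQ]; dsimp only; split_ifs <;> ring
  set 𝒜 : Fin 4 × ℕ × ℕ → Set (Fin 2 → ℤ) := fun q =>
    {x : Fin 2 → ℤ | ((q.2.1:ℤ)^2*(q.2.2:ℤ)^3) ∣ Lf a b q.1 x ∧ Lf a b q.1 x ≠ 0 ∧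
      |(Lf a b q.1 x : ℝ)| ≤ P q.1 ∧ |(Lf a b (jf q.1) x : ℝ)| ≤ Q q.1} with h𝒜
  set Fst : Finset (ℕ × ℕ) := (Finset.Icc 1 N₀ ×ˢ Finset.Icc 1 N₀).filter
      (fun q => T' ≤ (q.1:ℝ)^2 * (q.2:ℝ)^3) with hFst
  set F : Finset (Fin 4 × ℕ × ℕ) := Finset.univ ×ˢ Fst with hF
  have hq_facts : ∀ q ∈ F, 1 ≤ q.2.1 ∧ 1 ≤ q.2.2 := by
    intro q hq
    rw [hF, Finset.mem_product] at hq
    have h2 := hq.2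
    rw [hFst, Finset.mem_filter, Finset.mem_product, Finset.mem_Icc, Finset.mem_Icc] at h2
    exact ⟨h2.1.1.1, h2.1.2.1⟩
  have hcl : ∀ q ∈ F, (𝒜 q).Finite ∧
      ((𝒜 q).ncard : ℝ) ≤ 6 * P q.1 * Q q.1 / (((q.2.1:ℤ)^2*(q.2.2:ℤ)^3 : ℤ) : ℝ) := by
    intro q hq
    obtain ⟨hs1, ht1⟩ := hq_facts q hq
    have hdet := hprop q.1 (jf q.1) (hjne q.1)
    have hd : (0:ℤ) < (q.2.1:ℤ)^2*(q.2.2:ℤ)^3 := by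
      have h1 : (0:ℤ) < (q.2.1:ℤ) := by exact_mod_cast hs1
      have h2 : (0:ℤ) < (q.2.2:ℤ) := by exact_mod_cast ht1
      positivity
    exact count_lemma a b q.1 (jf q.1) hdet _ hd (P q.1) (Q q.1) (hPpos _) (hQ1 _)
  set 𝒮 : Set (Fin 2 → ℤ) := {x : Fin 2 → ℤ | IsPrim x ∧
      S ≤ (supNorm x : ℝ) ∧ (supNorm x : ℝ) < 2 * S ∧
      R ≤ |(Lf a b i₁ x : ℝ)| ∧ |(Lf a b i₁ x : ℝ)| < 2 * R ∧
      (∏ i, Lf a b i x) ≠ 0 ∧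
      T < (badPart (∏ i, Lf a b i x) : ℝ)} with h𝒮
  have hcover : 𝒮 ⊆ ⋃ q ∈ F, 𝒜 q := by
    intro x hx
    obtain ⟨hprim, hS1, hS2, hR1, hR2, hN0, hbad⟩ := hx
    have hLne : ∀ i, Lf a b i x ≠ 0 := by
      intro i hi
      exact hN0 (Finset.prod_eq_zero (Finset.mem_univ i) hi)
    obtain ⟨i₀, -, hi₀max⟩ := Finset.exists_max_image Finset.univ
      (fun i => badPart (Lf a b i x)) ⟨0, Finset.mem_univ 0⟩
    set u : ℕ := badPart (Lf a b i₀ x) with hu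
    have hprod_le : ∏ i, badPart (Lf a b i x) ≤ u^4 := by
      calc ∏ i, badPart (Lf a b i x) ≤ ∏ _i : Fin 4, u :=
            Finset.prod_le_prod' (fun i _ => hi₀max i (Finset.mem_univ i))
        _ = u^4 := by rw [Finset.prod_const]; norm_num
    have hkey := key1 a b hprop x hprim hN0
    have hDu : badPart (∏ i, Lf a b i x) ≤ D * u^4 := by
      rw [hD]
      exact le_trans hkey (Nat.mul_le_mul_left _ hprod_le)
    have hTbound : T < (D:ℝ) * ((u:ℕ):ℝ)^4 := by
      refine lt_of_lt_of_le hbad ?_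
      have : ((badPart (∏ i, Lf a b i x) : ℕ) : ℝ) ≤ ((D * u^4 : ℕ) : ℝ) := by
        exact_mod_cast hDu
      push_cast at this
      linarith
    have hT'u : T' ≤ (u:ℝ) := by
      have h1 : T / (D:ℝ) ≤ ((u:ℝ))^4 := by
        rw [div_le_iff₀ hD0']
        nlinarith
      have h2 : T' ≤ (((u:ℝ))^4)^(4⁻¹:ℝ) :=
        Real.rpow_le_rpow (by positivity) h1 (by norm_num)
      have h3 : (((u:ℝ))^4)^(4⁻¹:ℝ) = (u:ℝ) := by
        rw [← Real.rpow_natCast ((u:ℝ)) 4, ← Real.rpow_mul (by positivity)]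
        norm_num
      rw [h3] at h2
      exact h2
    obtain ⟨s, t, hs1, ht1, hst⟩ := badPart_decomp (Lf a b i₀ x)
    rw [← hu] at hst
    have hudvd : ((s:ℤ)^2*(t:ℤ)^3) ∣ Lf a b i₀ x := by
      have h1 := badPart_dvd (Lf a b i₀ x) (hLne i₀)
      rw [← hu, ← hst] at h1
      push_cast at h1
      exact h1
    have hsupLf : ∀ i, |(Lf a b i x : ℝ)| ≤ 2*(A:ℝ)*S := by
      intro i
      have hnat : (Lf a b i x).natAbs ≤ A * supNorm x := by
        unfold Lf
        calc (a i * x 0 + b i * x 1).natAbs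
            ≤ (a i * x 0).natAbs + (b i * x 1).natAbs := Int.natAbs_add_le _ _
          _ = (a i).natAbs * (x 0).natAbs + (b i).natAbs * (x 1).natAbs := by
              rw [Int.natAbs_mul, Int.natAbs_mul]
          _ ≤ (a i).natAbs * supNorm x + (b i).natAbs * supNorm x := by
              gcongr
              · exact Finset.le_sup (f := fun k => (x k).natAbs) (Finset.mem_univ (0 : Fin 2))
              · exact Finset.le_sup (f := fun k => (x k).natAbs) (Finset.mem_univ (1 : Fin 2))
          _ = ((a i).natAbs + (b i).natAbs) * supNorm x := by ring
          _ ≤ A * supNorm x := by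
              apply Nat.mul_le_mul_right
              rw [hA]
              exact Finset.single_le_sum (f := fun i : Fin 4 => (a i).natAbs + (b i).natAbs)
                (fun i _ => Nat.zero_le _) (Finset.mem_univ i)
      have habs : |(Lf a b i x : ℝ)| = ((Lf a b i x).natAbs : ℝ) := by
        rw [Nat.cast_natAbs, Int.cast_abs]
      rw [habs]
      have h1 : ((Lf a b i x).natAbs : ℝ) ≤ (A:ℝ) * (supNorm x : ℝ) := by
        exact_mod_cast hnat
      have h2 : (A:ℝ) * (supNorm x : ℝ) ≤ (A:ℝ) * (2*S) := by
        apply mul_le_mul_of_nonneg_left (le_of_lt hS2) (by positivity)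
      linarith
    have huls : (u:ℝ) ≤ 2*(A:ℝ)*S + 2*R := by
      have h1 : u ≤ (Lf a b i₀ x).natAbs := badPart_le_natAbs _ (hLne i₀)
      have h2 : ((Lf a b i₀ x).natAbs : ℝ) = |(Lf a b i₀ x : ℝ)| := by
        rw [Nat.cast_natAbs, Int.cast_abs]
      have h3 : (u:ℝ) ≤ ((Lf a b i₀ x).natAbs : ℝ) := by exact_mod_cast h1
      have := hsupLf i₀
      linarith [h2 ▸ this]
    have huN₀ : u ≤ N₀ := by
      have h1 : ((u:ℕ):ℝ) ≤ ((N₀:ℕ):ℝ) := le_trans huls (by rw [hN₀]; exact Nat.le_ceil _)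
      exact_mod_cast h1
    have hsu : s ≤ u := by
      calc s ≤ s^2 := Nat.le_self_pow (by norm_num) s
        _ ≤ s^2 * t^3 := Nat.le_mul_of_pos_right _ (by positivity)
        _ = u := hst
    have htu : t ≤ u := by
      calc t ≤ t^3 := Nat.le_self_pow (by norm_num) t
        _ ≤ s^2 * t^3 := Nat.le_mul_of_pos_left _ (by positivity)
        _ = u := hst
    have hqF : (i₀, s, t) ∈ F := by
      rw [hF, Finset.mem_product]
      refine ⟨Finset.mem_univ _, ?_⟩
      rw [hFst, Finset.mem_filter, Finset.mem_product, Finset.mem_Icc, Finset.mem_Icc]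
      refine ⟨⟨⟨hs1, le_trans hsu huN₀⟩, ht1, le_trans htu huN₀⟩, ?_⟩
      have hcast : ((s:ℕ):ℝ)^2 * ((t:ℕ):ℝ)^3 = ((u:ℕ):ℝ) := by
        rw [← hst]; push_cast; ring
      dsimp only
      rw [hcast]
      exact hT'u
    refine Set.mem_biUnion hqF ?_
    rw [h𝒜]
    refine ⟨hudvd, hLne i₀, ?_, ?_⟩
    · show |(Lf a b i₀ x : ℝ)| ≤ P i₀
      rw [hP]
      dsimp only
      split_ifs with h
      · rw [h]
        exact hR2.le
      · exact hsupLf i₀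
    · show |(Lf a b (jf i₀) x : ℝ)| ≤ Q i₀
      rw [hQ]
      dsimp only
      split_ifs with h
      · exact hsupLf _
      · have hji : jf i₀ = i₁ := by rw [hjf]; simp [h]
        rw [hji]
        exact hR2.le
  -- final assembly
  have hcount := ncard_le_sum_of_cover F 𝒜 (fun q hq => (hcl q hq).1) 𝒮 hcover
  have hperq : ∀ q ∈ F, ((𝒜 q).ncard : ℝ)
      ≤ 24*(A:ℝ)*S*R * ((1:ℝ)/((q.2.1:ℝ)^2 * (q.2.2:ℝ)^3)) := by
    intro q hq
    have h1 := (hcl q hq).2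
    have h2 : (((q.2.1:ℤ)^2*(q.2.2:ℤ)^3 : ℤ) : ℝ) = (q.2.1:ℝ)^2 * (q.2.2:ℝ)^3 := by
      push_cast; ring
    rw [h2, hPQ q.1] at h1
    calc ((𝒜 q).ncard : ℝ) ≤ 24*(A:ℝ)*S*R / ((q.2.1:ℝ)^2 * (q.2.2:ℝ)^3) := h1
      _ = 24*(A:ℝ)*S*R * ((1:ℝ)/((q.2.1:ℝ)^2 * (q.2.2:ℝ)^3)) := by ring
  have hsum1 : ∑ q ∈ F, ((𝒜 q).ncard : ℝ)
      ≤ ∑ q ∈ F, 24*(A:ℝ)*S*R * ((1:ℝ)/((q.2.1:ℝ)^2 * (q.2.2:ℝ)^3)) :=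
    Finset.sum_le_sum hperq
  have hsum2 : ∑ q ∈ F, 24*(A:ℝ)*S*R * ((1:ℝ)/((q.2.1:ℝ)^2 * (q.2.2:ℝ)^3))
      = 4 * (24*(A:ℝ)*S*R * ∑ p ∈ Fst, ((1:ℝ)/((p.1:ℝ)^2 * (p.2:ℝ)^3))) := by
    rw [hF, Finset.sum_product]
    dsimp only
    rw [Finset.sum_const, Finset.card_univ, Fintype.card_fin, nsmul_eq_mul, Finset.mul_sum,
      Finset.mul_sum, Finset.mul_sum]
    apply Finset.sum_congr rfl
    intro p _
    ring
  have hsum3 : ∑ p ∈ Fst, ((1:ℝ)/((p.1:ℝ)^2 * (p.2:ℝ)^3)) ≤ 6 / Real.sqrt T' := by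
    rw [hFst]
    exact mySumST N₀ T' hT'0
  have hsqrtT' : Real.sqrt T' = T^(8⁻¹:ℝ) / (D:ℝ)^(8⁻¹:ℝ) := by
    have hTD : (0:ℝ) ≤ T / (D:ℝ) := by positivity
    rw [hT', Real.sqrt_eq_rpow, ← Real.rpow_mul hTD, show (4⁻¹ * (1/2) : ℝ) = 8⁻¹ by norm_num,
      Real.div_rpow hT0.le hD0'.le]
  have hT8 : (0:ℝ) < T^(8⁻¹:ℝ) := Real.rpow_pos_of_pos hT0 _
  have hD8 : (D:ℝ)^(8⁻¹:ℝ) ≤ (D:ℝ) := by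
    calc (D:ℝ)^(8⁻¹:ℝ) ≤ (D:ℝ)^(1:ℝ) :=
          Real.rpow_le_rpow_of_exponent_le hD1' (by norm_num)
      _ = (D:ℝ) := Real.rpow_one _
  have hfin1 : 4 * (24*(A:ℝ)*S*R * (6 / Real.sqrt T'))
      ≤ 576 * (A:ℝ) * (D:ℝ) * (S*R) ^ ((1:ℝ) - δ/8) := by
    have e1 : 4 * (24*(A:ℝ)*S*R * (6 / Real.sqrt T'))
        = 576*(A:ℝ)*S*R * ((D:ℝ)^(8⁻¹:ℝ) / T^(8⁻¹:ℝ)) := by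
      rw [hsqrtT', div_div_eq_mul_div]
      field_simp
      ring
    rw [e1]
    have e2 : 576*(A:ℝ)*S*R * ((D:ℝ)^(8⁻¹:ℝ) / T^(8⁻¹:ℝ))
        ≤ 576*(A:ℝ)*S*R * ((D:ℝ) / T^(8⁻¹:ℝ)) := by
      gcongr
    refine le_trans e2 (le_of_eq ?_)
    have e4 : T^(8⁻¹:ℝ) = (S*R)^(δ/8) := by
      rw [hT, ← Real.rpow_mul hP₀0.le]
      rw [show (δ * 8⁻¹ : ℝ) = δ/8 by ring]
    have e3 : (S*R) ^ ((1:ℝ) - δ/8) = (S*R) / T^(8⁻¹:ℝ) := by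
      rw [Real.rpow_sub hP₀0, Real.rpow_one, e4]
    rw [e3]
    field_simp
  have hmain : ((𝒮.ncard : ℕ) : ℝ) ≤ 576 * (A:ℝ) * (D:ℝ) * (S*R) ^ ((1:ℝ) - δ/8) := by
    calc ((𝒮.ncard : ℕ) : ℝ) ≤ ∑ q ∈ F, ((𝒜 q).ncard : ℝ) := hcount
      _ ≤ ∑ q ∈ F, 24*(A:ℝ)*S*R * ((1:ℝ)/((q.2.1:ℝ)^2 * (q.2.2:ℝ)^3)) := hsum1
      _ = 4 * (24*(A:ℝ)*S*R * ∑ p ∈ Fst, ((1:ℝ)/((p.1:ℝ)^2 * (p.2:ℝ)^3))) := hsum2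
      _ ≤ 4 * (24*(A:ℝ)*S*R * (6 / Real.sqrt T')) := by
          apply mul_le_mul_of_nonneg_left ?_ (by norm_num)
          apply mul_le_mul_of_nonneg_left hsum3 (by positivity)
      _ ≤ 576 * (A:ℝ) * (D:ℝ) * (S*R) ^ ((1:ℝ) - δ/8) := hfin1
  exact hmain
end
end

section
/- For every prime p and every integer t ≥ 1, #{(x,y) ∈ (ℤ/p^tℤ)² × (ℤ/p^tℤ)⁴ : L₁(x)y₁² + L₂(x)y₂² + L₃(x)y₃² + L₄(x)y₄² ≡ 0 mod p^t} = p^{5t} + (p − 1)·Σ_{j=1}^{t} p^{5t − 3j − 1}·ϱ(p^j). -/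
open scoped BigOperators

noncomputable section

/-- `ϱ(q)`: the number of `y ∈ (ℤ/qℤ)⁴` with `Q₁(y) ≡ Q₂(y) ≡ 0 mod q`. -/
def rhoQ (a b : Fin 4 → ℤ) (q : ℕ) : ℕ :=
  Set.ncard {y : Fin 4 → ZMod q |
    (∑ i, (a i : ZMod q) * y i ^ 2 = 0) ∧ (∑ i, (b i : ZMod q) * y i ^ 2 = 0)}

section Helpers

lemma kr {A B : Type*} [AddCommGroup A] [AddCommGroup B] (f : A →+ B) :
    Nat.card f.ker * Nat.card f.range = Nat.card A := by
  rw [AddSubgroup.card_eq_card_quotient_mul_card_addSubgroup f.ker,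
    Nat.card_congr (QuotientAddGroup.quotientKerEquivRange f).toEquiv, mul_comm]

instance zmodPIR (n : ℕ) : IsPrincipalIdealRing (ZMod n) :=
  IsPrincipalIdealRing.of_surjective (Int.castRingHom (ZMod n)) ZMod.intCast_surjective

lemma ann_card (n : ℕ) [NeZero n] (g : ZMod n) :
    Nat.card {w : ZMod n // g * w = 0} * Nat.card (Ideal.span {g} : Ideal (ZMod n)) = n := by
  have h := kr (AddMonoidHom.mulLeft g)
  rw [Nat.card_zmod] at h
  have h1 : Nat.card (AddMonoidHom.mulLeft g).ker = Nat.card {w : ZMod n // g * w = 0} :=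
    Nat.card_congr (Equiv.subtypeEquivRight fun w => by
      simp [AddMonoidHom.mem_ker, AddMonoidHom.mulLeft])
  have h2 : ((AddMonoidHom.mulLeft g).range : Set (ZMod n)) =
      (Ideal.span {g} : Ideal (ZMod n)) := by
    ext x
    simp only [AddMonoidHom.coe_range, Set.mem_range, SetLike.mem_coe,
      Ideal.mem_span_singleton']
    exact ⟨fun ⟨w, hw⟩ => ⟨w, by simpa [AddMonoidHom.mulLeft, mul_comm] using hw⟩,
      fun ⟨w, hw⟩ => ⟨w, by simpa [AddMonoidHom.mulLeft, mul_comm] using hw⟩⟩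
  have h3 : Nat.card (AddMonoidHom.mulLeft g).range =
      Nat.card (Ideal.span {g} : Ideal (ZMod n)) := by
    apply Nat.card_congr
    exact Equiv.setCongr h2
  rw [h1, h3] at h
  exact h

lemma pair_card (n : ℕ) [NeZero n] (c d : ZMod n) :
    Nat.card {x : Fin 2 → ZMod n // c * x 0 + d * x 1 = 0} =
      n * Nat.card {w : ZMod n // c * w = 0 ∧ d * w = 0} := by
  set f : (Fin 2 → ZMod n) →+ ZMod n :=
    { toFun := fun x => c * x 0 + d * x 1
      map_zero' := by simp
      map_add' := fun x y => by simp only [Pi.add_apply]; ring } with hf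
  obtain ⟨g, hg0⟩ : (Ideal.span ({c, d} : Set (ZMod n))).IsPrincipal :=
    IsPrincipalIdealRing.principal _
  have hg : Ideal.span ({c, d} : Set (ZMod n)) = Ideal.span ({g} : Set (ZMod n)) := hg0
  have hcg : ∃ u, u * g = c := by
    rw [← Ideal.mem_span_singleton', ← hg]
    exact Ideal.subset_span (by simp)
  have hdg : ∃ u, u * g = d := by
    rw [← Ideal.mem_span_singleton', ← hg]
    exact Ideal.subset_span (by simp)
  have hgc : ∃ u v, u * c + v * d = g := by
    rw [← Ideal.mem_span_pair, hg]
    exact Ideal.subset_span (by simp)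
  have hiff : ∀ w : ZMod n, (c * w = 0 ∧ d * w = 0) ↔ g * w = 0 := by
    intro w
    constructor
    · rintro ⟨h1, h2⟩
      obtain ⟨u, v, huv⟩ := hgc
      rw [← huv, add_mul, mul_assoc, mul_assoc, h1, h2, mul_zero, mul_zero, add_zero]
    · intro h
      obtain ⟨u, hu⟩ := hcg
      obtain ⟨v, hv⟩ := hdg
      constructor
      · rw [← hu, mul_assoc, h, mul_zero]
      · rw [← hv, mul_assoc, h, mul_zero]
  have hrange : (f.range : Set (ZMod n)) = (Ideal.span ({c, d} : Set (ZMod n)) : Ideal (ZMod n)) := by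
    ext x
    simp only [AddMonoidHom.coe_range, Set.mem_range, SetLike.mem_coe, Ideal.mem_span_pair]
    constructor
    · rintro ⟨w, hw⟩
      exact ⟨w 0, w 1, by simpa [hf, mul_comm] using hw⟩
    · rintro ⟨u, v, huv⟩
      exact ⟨![u, v], by simpa [hf, mul_comm] using huv⟩
  have h0 := kr f
  have hdom : Nat.card (Fin 2 → ZMod n) = n ^ 2 := by
    simp [Nat.card_eq_fintype_card, Fintype.card_fun, ZMod.card]
  have hker : Nat.card f.ker = Nat.card {x : Fin 2 → ZMod n // c * x 0 + d * x 1 = 0} :=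
    Nat.card_congr (Equiv.subtypeEquivRight fun x => by
      simp [AddMonoidHom.mem_ker, hf])
  have hrg : Nat.card f.range = Nat.card (Ideal.span ({g} : Set (ZMod n)) : Ideal (ZMod n)) := by
    rw [← hg]
    exact Nat.card_congr (Equiv.setCongr hrange)
  have hann : Nat.card {w : ZMod n // c * w = 0 ∧ d * w = 0} =
      Nat.card {w : ZMod n // g * w = 0} :=
    Nat.card_congr (Equiv.subtypeEquivRight hiff)
  have hA := ann_card n g
  rw [hdom, hker, hrg] at h0
  rw [hann]
  have hKpos : 0 < Nat.card (Ideal.span ({g} : Set (ZMod n)) : Ideal (ZMod n)) :=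
    Nat.card_pos
  apply Nat.eq_of_mul_eq_mul_right hKpos
  rw [h0, mul_assoc, hA, sq]

lemma ann_pair_card (p : ℕ) (hp : p.Prime) (t : ℕ) (c d : ZMod (p ^ t)) :
    Nat.card {w : ZMod (p ^ t) // c * w = 0 ∧ d * w = 0} =
      ∑ j ∈ Finset.range (t + 1),
        if p ^ j ∣ c.val ∧ p ^ j ∣ d.val then Nat.totient (p ^ j) else 0 := by
  haveI : NeZero (p ^ t) := ⟨pow_ne_zero t hp.pos.ne'⟩
  have hmul : ∀ (e w : ZMod (p ^ t)), e * w = 0 ↔ addOrderOf w ∣ e.val := by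
    intro e w
    rw [show e * w = e.val • w from by rw [nsmul_eq_mul, ZMod.natCast_val, ZMod.cast_id],
      ← addOrderOf_dvd_iff_nsmul_eq_zero]
  have hord : ∀ w : ZMod (p ^ t), ∃ j ≤ t, addOrderOf w = p ^ j := by
    intro w
    have h1 : addOrderOf w ∣ p ^ t := by
      have := addOrderOf_dvd_card (x := w)
      rwa [ZMod.card] at this
    obtain ⟨j, hj, hw⟩ := (Nat.dvd_prime_pow hp).mp h1
    exact ⟨j, hj, hw⟩
  have hcard : Nat.card {w : ZMod (p ^ t) // c * w = 0 ∧ d * w = 0} =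
      (Finset.univ.filter fun w : ZMod (p ^ t) =>
        addOrderOf w ∣ c.val ∧ addOrderOf w ∣ d.val).card := by
    rw [Nat.card_eq_fintype_card, Fintype.card_subtype]
    congr 1
    apply Finset.filter_congr
    intro w _
    rw [hmul, hmul]
  rw [hcard]
  rw [Finset.card_eq_sum_card_fiberwise
    (f := fun w : ZMod (p ^ t) => (addOrderOf w).factorization p)
    (t := Finset.range (t + 1)) ?_]
  · apply Finset.sum_congr rfl
    intro j hj
    have hjt : j ≤ t := by simpa using Nat.lt_succ_iff.mp (Finset.mem_range.mp hj)
    have hpred : ∀ w : ZMod (p ^ t),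
        ((addOrderOf w ∣ c.val ∧ addOrderOf w ∣ d.val) ∧ (addOrderOf w).factorization p = j) ↔
        (addOrderOf w = p ^ j ∧ (p ^ j ∣ c.val ∧ p ^ j ∣ d.val)) := by
      intro w
      obtain ⟨i, hi, hw⟩ := hord w
      rw [hw]
      rw [Nat.Prime.factorization_pow hp, Finsupp.single_eq_same]
      constructor
      · rintro ⟨⟨h1, h2⟩, rfl⟩
        exact ⟨rfl, h1, h2⟩
      · rintro ⟨he, h1, h2⟩
        have : i = j := Nat.pow_right_injective hp.two_le he
        subst this
        exact ⟨⟨h1, h2⟩, rfl⟩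
    rw [Finset.filter_filter]
    rw [show (Finset.univ.filter fun w : ZMod (p ^ t) =>
        (addOrderOf w ∣ c.val ∧ addOrderOf w ∣ d.val) ∧ (addOrderOf w).factorization p = j) =
        (Finset.univ.filter fun w : ZMod (p ^ t) =>
        addOrderOf w = p ^ j ∧ (p ^ j ∣ c.val ∧ p ^ j ∣ d.val)) from
      Finset.filter_congr fun w _ => by rw [hpred]]
    by_cases hC : p ^ j ∣ c.val ∧ p ^ j ∣ d.val
    · simp only [hC, if_true, and_true]
      have hdvd : p ^ j ∣ Fintype.card (ZMod (p ^ t)) := by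
        rw [ZMod.card]; exact pow_dvd_pow p hjt
      have := IsAddCyclic.card_addOrderOf_eq_totient (α := ZMod (p ^ t)) (d := p ^ j) hdvd
      convert this using 2
    · simp [hC]
  · intro w hw
    obtain ⟨j, hj, hwj⟩ := hord w
    simp only [hwj, Nat.Prime.factorization_pow hp, Finsupp.single_eq_same]
    exact Finset.mem_range.mpr (Nat.lt_succ_of_le hj)

lemma preimage_card {A B : Type*} [AddCommGroup A] [AddCommGroup B] [Fintype A] [Fintype B]
    [DecidableEq A] [DecidableEq B] (f : A →+ B) (hf : Function.Surjective f)
    (P : B → Prop) [DecidablePred P] :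
    (Finset.univ.filter fun a => P (f a)).card =
      (Finset.univ.filter P).card * Nat.card f.ker := by
  have hfib : ∀ b : B, (Finset.univ.filter fun a => f a = b).card = Nat.card f.ker := by
    intro b
    obtain ⟨a₀, ha₀⟩ := hf b
    rw [Nat.card_eq_fintype_card, ← Fintype.card_subtype]
    apply Fintype.card_congr
    refine
      { toFun := fun a => ⟨a.1 - a₀, ?_⟩
        invFun := fun k => ⟨k.1 + a₀, ?_⟩
        left_inv := fun a => by simp
        right_inv := fun k => by simp }
    · have := a.2
      simp [AddMonoidHom.mem_ker, map_sub, a.2, ha₀]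
    · have hk := k.2
      rw [AddMonoidHom.mem_ker] at hk
      simp [map_add, hk, ha₀]
  rw [Finset.card_eq_sum_card_fiberwise (f := fun a => f a) (t := Finset.univ.filter P)
    (fun a ha => by
      simpa using ha)]
  rw [Finset.sum_congr rfl (fun b hb => ?_), Finset.sum_const, smul_eq_mul]
  have hPb : P b := (Finset.mem_filter.mp hb).2
  rw [Finset.filter_filter]
  rw [show (Finset.univ.filter fun a => P (f a) ∧ f a = b) =
      (Finset.univ.filter fun a => f a = b) from
    Finset.filter_congr fun a _ => by
      constructor
      · exact fun h => h.2
      · exact fun h => ⟨h ▸ hPb, h⟩]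
  exact hfib b

lemma Mj_card (a b : Fin 4 → ℤ) (p : ℕ) (hp : p.Prime) (t j : ℕ) (hj : j ≤ t)
    [NeZero (p ^ t)] [NeZero (p ^ j)] :
    (Finset.univ.filter fun y : Fin 4 → ZMod (p ^ t) =>
        p ^ j ∣ (∑ i, (a i : ZMod (p ^ t)) * y i ^ 2).val ∧
        p ^ j ∣ (∑ i, (b i : ZMod (p ^ t)) * y i ^ 2).val).card =
      rhoQ a b (p ^ j) * p ^ (4 * (t - j)) := by
  have hdvd : p ^ j ∣ p ^ t := pow_dvd_pow p hj
  set π : ZMod (p ^ t) →+* ZMod (p ^ j) := ZMod.castHom hdvd (ZMod (p ^ j)) with hπ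
  have hπ0 : ∀ x : ZMod (p ^ t), π x = 0 ↔ p ^ j ∣ x.val := by
    intro x
    rw [hπ, ZMod.castHom_apply, ← ZMod.natCast_val, ZMod.natCast_eq_zero_iff]
  set f : (Fin 4 → ZMod (p ^ t)) →+ (Fin 4 → ZMod (p ^ j)) :=
    π.toAddMonoidHom.compLeft (Fin 4) with hfdef
  have hfapp : ∀ (y : Fin 4 → ZMod (p ^ t)) (i : Fin 4), f y i = π (y i) := fun _ _ => rfl
  have hfsurj : Function.Surjective f := by
    intro z
    choose y hy using fun i => ZMod.ringHom_surjective π (z i)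
    exact ⟨y, funext hy⟩
  set P : (Fin 4 → ZMod (p ^ j)) → Prop := fun z =>
    (∑ i, (a i : ZMod (p ^ j)) * z i ^ 2 = 0) ∧ (∑ i, (b i : ZMod (p ^ j)) * z i ^ 2 = 0)
    with hP
  have hcomm : ∀ (c : Fin 4 → ℤ) (y : Fin 4 → ZMod (p ^ t)),
      π (∑ i, (c i : ZMod (p ^ t)) * y i ^ 2) = ∑ i, (c i : ZMod (p ^ j)) * (f y i) ^ 2 := by
    intro c y
    rw [map_sum]
    apply Finset.sum_congr rfl
    intro i _
    rw [map_mul, map_pow, map_intCast, hfapp]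
  have hfilter : (Finset.univ.filter fun y : Fin 4 → ZMod (p ^ t) =>
        p ^ j ∣ (∑ i, (a i : ZMod (p ^ t)) * y i ^ 2).val ∧
        p ^ j ∣ (∑ i, (b i : ZMod (p ^ t)) * y i ^ 2).val) =
      (Finset.univ.filter fun y => P (f y)) := by
    apply Finset.filter_congr
    intro y _
    rw [hP]
    simp only [← hπ0, hcomm]
  rw [hfilter, preimage_card f hfsurj P]
  congr 1
  · rw [rhoQ, ← Nat.card_coe_set_eq, Nat.card_eq_fintype_card]
    rw [Fintype.card_subtype]
    apply Finset.card_bij (fun y _ => y) <;> simp [hP, Set.mem_setOf_eq]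
  · -- Nat.card f.ker = p ^ (4 * (t - j))
    have h0 := kr f
    have hrange : Nat.card f.range = p ^ (4 * j) := by
      rw [AddMonoidHom.range_eq_top_of_surjective f hfsurj]
      rw [Nat.card_congr AddSubgroup.topEquiv.toEquiv]
      simp [Nat.card_eq_fintype_card, Fintype.card_fun, ZMod.card, ← pow_mul, mul_comm]
    have hdom : Nat.card (Fin 4 → ZMod (p ^ t)) = p ^ (4 * t) := by
      simp [Nat.card_eq_fintype_card, Fintype.card_fun, ZMod.card, ← pow_mul, mul_comm]
    rw [hrange, hdom] at h0
    have hpos : 0 < p ^ (4 * j) := pow_pos hp.pos _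
    apply Nat.eq_of_mul_eq_mul_right hpos
    rw [h0, ← pow_add]
    congr 1
    omega

lemma rhoQ_one (a b : Fin 4 → ℤ) : rhoQ a b 1 = 1 := by
  rw [rhoQ]
  have : {y : Fin 4 → ZMod 1 |
      (∑ i, (a i : ZMod 1) * y i ^ 2 = 0) ∧ (∑ i, (b i : ZMod 1) * y i ^ 2 = 0)} = Set.univ := by
    ext y
    constructor
    · intro _; trivial
    · intro _; exact ⟨Subsingleton.elim _ _, Subsingleton.elim _ _⟩
  rw [this, Set.ncard_univ, Nat.card_eq_fintype_card]
  simp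


end Helpers

/-- Lemma 8.2 (lem:npt) of the paper, as an exact identity. -/
theorem stmt19
    (a b : Fin 4 → ℤ)
    (hcop : ∀ i, IsCoprime (a i) (b i))
    (hprop : ∀ i j, i ≠ j → a i * b j - a j * b i ≠ 0)
    (p : ℕ) (hp : p.Prime) (t : ℕ) (ht : 1 ≤ t) :
    Set.ncard {xy : (Fin 2 → ZMod (p ^ t)) × (Fin 4 → ZMod (p ^ t)) |
        ∑ i, ((a i : ZMod (p ^ t)) * xy.1 0 + (b i : ZMod (p ^ t)) * xy.1 1) * xy.2 i ^ 2
          = 0} =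
      p ^ (5 * t) + (p - 1) * ∑ j ∈ Finset.Icc 1 t, p ^ (5 * t - 3 * j - 1) * rhoQ a b (p ^ j) := by
  haveI : NeZero (p ^ t) := ⟨pow_ne_zero t hp.pos.ne'⟩
  set n := p ^ t with hn
  set C : (Fin 4 → ZMod n) → ZMod n := fun y => ∑ i, (a i : ZMod n) * y i ^ 2 with hC
  set D : (Fin 4 → ZMod n) → ZMod n := fun y => ∑ i, (b i : ZMod n) * y i ^ 2 with hD
  have halg : ∀ (x : Fin 2 → ZMod n) (y : Fin 4 → ZMod n),
      ∑ i, ((a i : ZMod n) * x 0 + (b i : ZMod n) * x 1) * y i ^ 2 =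
        C y * x 0 + D y * x 1 := by
    intro x y
    rw [hC, hD]
    simp only [Finset.sum_mul]
    rw [← Finset.sum_add_distrib]
    apply Finset.sum_congr rfl
    intro i _
    ring
  rw [← Nat.card_coe_set_eq]
  have e : {xy : (Fin 2 → ZMod n) × (Fin 4 → ZMod n) |
        ∑ i, ((a i : ZMod n) * xy.1 0 + (b i : ZMod n) * xy.1 1) * xy.2 i ^ 2 = 0} ≃
      Σ y : Fin 4 → ZMod n, {x : Fin 2 → ZMod n // C y * x 0 + D y * x 1 = 0} :=
    { toFun := fun s => ⟨s.1.2, s.1.1, by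
        have h := s.2
        rw [Set.mem_setOf_eq, halg] at h
        exact h⟩
      invFun := fun s => ⟨(s.2.1, s.1), by
        rw [Set.mem_setOf_eq, halg]
        exact s.2.2⟩
      left_inv := fun s => rfl
      right_inv := fun s => rfl }
  rw [Nat.card_congr e, Nat.card_eq_fintype_card, Fintype.card_sigma]
  have hy : ∀ y : Fin 4 → ZMod n, Fintype.card {x : Fin 2 → ZMod n // C y * x 0 + D y * x 1 = 0}
      = n * ∑ j ∈ Finset.range (t + 1),
          if p ^ j ∣ (C y).val ∧ p ^ j ∣ (D y).val then Nat.totient (p ^ j) else 0 := by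
    intro y
    rw [← Nat.card_eq_fintype_card, pair_card n (C y) (D y), ann_pair_card p hp t (C y) (D y)]
  rw [Finset.sum_congr rfl fun y _ => hy y, ← Finset.mul_sum, Finset.sum_comm]
  have hinner : ∀ j ∈ Finset.range (t + 1),
      (∑ y : Fin 4 → ZMod n,
        if p ^ j ∣ (C y).val ∧ p ^ j ∣ (D y).val then Nat.totient (p ^ j) else 0) =
      rhoQ a b (p ^ j) * p ^ (4 * (t - j)) * Nat.totient (p ^ j) := by
    intro j hj
    have hjt : j ≤ t := Nat.lt_succ_iff.mp (Finset.mem_range.mp hj)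
    haveI : NeZero (p ^ j) := ⟨pow_ne_zero j hp.pos.ne'⟩
    rw [← Finset.sum_filter, Finset.sum_const, smul_eq_mul]
    rw [show (Finset.univ.filter fun y : Fin 4 → ZMod n =>
        p ^ j ∣ (C y).val ∧ p ^ j ∣ (D y).val).card = rhoQ a b (p ^ j) * p ^ (4 * (t - j)) from
      Mj_card a b p hp t j hjt]
  rw [Finset.sum_congr rfl hinner]
  have hsplit : Finset.range (t + 1) = insert 0 (Finset.Icc 1 t) := by
    ext k
    simp only [Finset.mem_range, Finset.mem_insert, Finset.mem_Icc]
    omega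
  rw [hsplit, Finset.sum_insert (by simp)]
  have h0 : rhoQ a b (p ^ 0) * p ^ (4 * (t - 0)) * Nat.totient (p ^ 0) = p ^ (4 * t) := by
    rw [pow_zero, rhoQ_one, Nat.totient_one]
    simp
  rw [h0, Nat.mul_add]
  congr 1
  · rw [← pow_add]
    congr 1
    omega
  · rw [Finset.mul_sum, Finset.mul_sum]
    apply Finset.sum_congr rfl
    intro j hj
    obtain ⟨hj1, hjt⟩ := Finset.mem_Icc.mp hj
    rw [Nat.totient_prime_pow hp hj1]
    have hexp : n * p ^ (4 * (t - j)) * p ^ (j - 1) = p ^ (5 * t - 3 * j - 1) := by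
      rw [hn, ← pow_add, ← pow_add]
      congr 1
      omega
    calc n * (rhoQ a b (p ^ j) * p ^ (4 * (t - j)) * (p ^ (j - 1) * (p - 1)))
        = (n * p ^ (4 * (t - j)) * p ^ (j - 1)) * ((p - 1) * rhoQ a b (p ^ j)) := by ring
      _ = (p - 1) * (p ^ (5 * t - 3 * j - 1) * rhoQ a b (p ^ j)) := by rw [hexp]; ring
end
end
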